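/- arXiv:1702.00190 — 2 statements merged into one kernel-verified Lean document; each statement's English description precedes it below -/
import Mathlib

section
/- For every discriminating symbolically dated phylogenetic tree (T,t) on X, no 5-element subset of X is 5-5 partitioned by the induced map δ_(T,t). -/
namespace PhyloPaper

variable {V X M : Type}

/-- The degree of a vertex: the number of its neighbors. -/
noncomputable def deg (G : SimpleGraph V) (v : V) : ℕ := (G.neighborSet v).ncard

/-- `v` lies on the (unique, in a tree) path between `x` and `y`. -/
def OnPath (G : SimpleGraph V) (x y v : V) : Prop :=
  ∀ p : G.Walk x y, p.IsPath → v ∈ p.support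

/-- `m` is a median of `x, y, z`: it lies on all three pairwise paths. -/
def IsMedian (G : SimpleGraph V) (x y z m : V) : Prop :=
  OnPath G x y m ∧ OnPath G y z m ∧ OnPath G x z m

/-- An (unrooted) phylogenetic tree on `X`: a tree whose leaf set is (the image of) `X`
and which has no vertex of degree 2. -/
structure IsPhyloTree (G : SimpleGraph V) (leaf : X → V) : Prop where
  isTree : G.IsTree
  leaf_inj : Function.Injective leaf
  leaf_iff : ∀ v : V, (∃ x : X, leaf x = v) ↔ deg G v = 1
  no_deg_two : ∀ v : V, deg G v ≠ 2

/-- A phylogenetic tree is binary if every interior vertex (degree ≥ 2) has degree 3. -/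
def IsBinary (G : SimpleGraph V) : Prop := ∀ v : V, 2 ≤ deg G v → deg G v = 3

/-- A symbolic dating map sends every leaf to `⊙` (modelled as `none`). -/
def IsDatingMap (leaf : X → V) (t : V → Option M) : Prop := ∀ x : X, t (leaf x) = none

/-- A dating map is discriminating if adjacent vertices get different values. -/
def Discriminating (G : SimpleGraph V) (t : V → Option M) : Prop :=
  ∀ u v : V, G.Adj u v → t u ≠ t v

/-- `δ` is the ternary map induced by the dated tree `(G, leaf, t)`:
`δ x y z = t (med (leaf x) (leaf y) (leaf z))`. -/
def InducedDelta (G : SimpleGraph V) (leaf : X → V) (t : V → Option M)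
    (δ : X → X → X → Option M) : Prop :=
  ∀ x y z : X, ∃ m : V, IsMedian G (leaf x) (leaf y) (leaf z) m ∧ δ x y z = t m

/-- The (well-defined, for symmetric `δ`) value of `δ` on a 3-element subset `T` is `a`. -/
def ValOn (δ : X → X → X → Option M) [DecidableEq X] (T : Finset X) (a : Option M) : Prop :=
  ∃ x y z : X, x ≠ y ∧ x ≠ z ∧ y ≠ z ∧ T = {x, y, z} ∧ δ x y z = a

/-- `S` is `n`-`m` partitioned by `δ`: `δ` takes exactly two values on the 3-element
subsets of `S`, one value on exactly `n` of them and the other on exactly `m` of them. -/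
def Partitioned [DecidableEq X] (δ : X → X → X → Option M) (S : Finset X) (n m : ℕ) : Prop :=
  ∃ a b : Option M, a ≠ b ∧
    {T : Finset X | T ∈ S.powersetCard 3 ∧ ValOn δ T a}.ncard = n ∧
    {T : Finset X | T ∈ S.powersetCard 3 ∧ ValOn δ T b}.ncard = m ∧
    ∀ T ∈ S.powersetCard 3, ValOn δ T a ∨ ValOn δ T b

/-- Condition (1): `δ` is symmetric under all permutations of its arguments. -/
def Symm3 (δ : X → X → X → Option M) : Prop :=
  ∀ x y z : X, δ x y z = δ y x z ∧ δ x y z = δ x z y ∧ δ x y z = δ z y x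

/-- Condition (2): `δ x y z = ⊙` iff `x, y, z` are not pairwise distinct. -/
def VanishCond (δ : X → X → X → Option M) : Prop :=
  ∀ x y z : X, δ x y z = none ↔ (x = y ∨ y = z ∨ x = z)

/-- `a, b, c, d` are pairwise distinct. -/
def P4 (a b c d : X) : Prop := a ≠ b ∧ a ≠ c ∧ a ≠ d ∧ b ≠ c ∧ b ≠ d ∧ c ≠ d

/-- `a, b, c, d, e` are pairwise distinct. -/
def P5 (a b c d e : X) : Prop := P4 a b c d ∧ a ≠ e ∧ b ≠ e ∧ c ≠ e ∧ d ≠ e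

/-- Condition (3): on four distinct taxa `δ` takes at most 2 values, and if exactly 2,
then the 4-set is 2-2 partitioned. -/
def FourPointCond [DecidableEq X] (δ : X → X → X → Option M) : Prop :=
  ∀ x y z u : X, P4 x y z u →
    ({δ x y z, δ x y u, δ x z u, δ y z u} : Set (Option M)).ncard ≤ 2 ∧
    (({δ x y z, δ x y u, δ x z u, δ y z u} : Set (Option M)).ncard = 2 →
      Partitioned δ ({x, y, z, u} : Finset X) 2 2)

/-- Condition (4): no 5-element subset of `X` is 5-5 partitioned by `δ`. -/
def FivePointCond [DecidableEq X] (δ : X → X → X → Option M) : Prop :=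
  ∀ S : Finset X, S.card = 5 → ¬ Partitioned δ S 5 5

/-- A symbolic ternary metric. -/
def IsSymbolicTernaryMetric [DecidableEq X] (δ : X → X → X → Option M) : Prop :=
  Symm3 δ ∧ VanishCond δ ∧ FourPointCond δ ∧ FivePointCond δ

/-- Condition (*): `δ` is fully resolved. -/
def FullyResolved [DecidableEq X] (δ : X → X → X → Option M) : Prop :=
  ∀ x y z u : X, P4 x y z u →
    ({δ x y z, δ x y u, δ x z u, δ y z u} : Set (Option M)).ncard = 1 →
    ∃ e : X, Partitioned δ ({x, y, z, u, e} : Finset X) 4 6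

/-- The tree displays the quartet `ab|cd`: the path from `a` to `b` is
vertex-disjoint from the path from `c` to `d`. -/
def Displays (G : SimpleGraph V) (leaf : X → V) (a b c d : X) : Prop :=
  ∃ p : G.Walk (leaf a) (leaf b), p.IsPath ∧
    ∃ q : G.Walk (leaf c) (leaf d), q.IsPath ∧ ∀ v : V, v ∈ p.support → v ∉ q.support

/-- `Q a b c d` represents membership of the quartet `ab|cd`; a quartet system must be
invariant under the symmetries of quartets and only contain genuine quartets. -/
def IsQuartetSystem (Q : X → X → X → X → Prop) : Prop :=
  ∀ a b c d : X, (Q a b c d → P4 a b c d) ∧ (Q a b c d ↔ Q b a c d) ∧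
    (Q a b c d ↔ Q a b d c) ∧ (Q a b c d ↔ Q c d a b)

/-- Thin: at most one of the three quartets on any 4 taxa. -/
def Thin (Q : X → X → X → X → Prop) : Prop :=
  ∀ a b c d : X, P4 a b c d →
    ¬(Q a b c d ∧ Q a c b d) ∧ ¬(Q a b c d ∧ Q a d b c) ∧ ¬(Q a c b d ∧ Q a d b c)

/-- Transitive quartet system. -/
def TransitiveQ (Q : X → X → X → X → Prop) : Prop :=
  ∀ a b c d e : X, P5 a b c d e → Q a b c e → Q a b d e → Q a b c d

/-- Saturated quartet system. -/
def SaturatedQ (Q : X → X → X → X → Prop) : Prop :=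
  ∀ a b c d e : X, P5 a b c d e → Q a b c d → (Q a e c d ∨ Q a b c e)

/-- Complete: exactly one of the three quartets on any 4 distinct taxa. -/
def CompleteQ (Q : X → X → X → X → Prop) : Prop :=
  ∀ a b c d : X, P4 a b c d →
    (Q a b c d ∨ Q a c b d ∨ Q a d b c) ∧
    ¬(Q a b c d ∧ Q a c b d) ∧ ¬(Q a b c d ∧ Q a d b c) ∧ ¬(Q a c b d ∧ Q a d b c)

/-- `δ` generates the quartet `xy|zu`. -/
def Generates (δ : X → X → X → Option M) (x y z u : X) : Prop :=
  P4 x y z u ∧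
  ((δ x z u = δ y z u ∧ δ y z u ≠ δ x y z ∧ δ x y z = δ x y u) ∨
   (δ x y z = δ x y u ∧ δ x y u = δ x z u ∧ δ x z u = δ y z u ∧
    ∃ e : X, δ x y e = δ x y z ∧ δ z u e = δ x y z ∧
      δ x u e ≠ δ x y z ∧ δ x u e = δ x z e ∧ δ x z e = δ y z e ∧ δ y z e = δ y u e))

/-- A rooted phylogenetic tree on `X` with root `ρ`: a tree whose leaves (in the rooted
sense: out-degree 0, i.e. non-root vertices of degree 1) are exactly the image of `X`,
and with no non-root vertex of in-degree one and out-degree one (i.e. degree 2). -/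
structure IsRootedPhyloTree (G : SimpleGraph V) (ρ : V) (leaf : X → V) : Prop where
  isTree : G.IsTree
  leaf_inj : Function.Injective leaf
  leaf_iff : ∀ v : V, (∃ x : X, leaf x = v) ↔ (v ≠ ρ ∧ deg G v = 1)
  no_in_out_deg_one : ∀ v : V, v ≠ ρ → deg G v ≠ 2

/-- `d` is the binary map induced by the rooted dated tree:
`d x y = t (lca x y)`, where the last common ancestor is the median of `ρ, x, y`. -/
def InducedD (G : SimpleGraph V) (ρ : V) (leaf : X → V) (t : V → Option M)
    (d : X → X → Option M) : Prop :=
  ∀ x y : X, ∃ m : V, IsMedian G ρ (leaf x) (leaf y) m ∧ d x y = t m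

/-- Symbolic ultrametric: conditions (U1)-(U4). -/
def IsSymbolicUltrametric (d : X → X → Option M) : Prop :=
  (∀ x y : X, d x y = none ↔ x = y) ∧
  (∀ x y : X, d x y = d y x) ∧
  (∀ x y z : X, ({d x y, d x z, d y z} : Set (Option M)).ncard ≤ 2) ∧
  ¬ ∃ x y u v : X, P4 x y u v ∧ d x y = d y u ∧ d y u = d u v ∧
      d u v ≠ d y v ∧ d y v = d x v ∧ d x v = d x u

/-- `x` and `y` are `m`-equivalent with respect to `δ`. -/
def MEquiv (δ : X → X → X → Option M) (m : Option M) (x y : X) : Prop :=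
  (∃ z : X, δ x y z = m) ∧
  ∀ u v : X, u ≠ x → u ≠ y → v ≠ x → v ≠ y → (δ x u v = m ↔ δ y u v = m)

/-- `x ∼_δ y`: `x` and `y` are `m`-equivalent for some `m`. -/
def DeltaEquiv (δ : X → X → X → Option M) (x y : X) : Prop :=
  ∃ m : Option M, MEquiv δ m x y

/-- `C` is a pseudo-cherry of the tree: `C` has at least 2 elements and is exactly the
set of leaves adjacent to some interior vertex `v`. -/
def IsPseudoCherry (G : SimpleGraph V) (leaf : X → V) (C : Set X) : Prop :=
  2 ≤ C.ncard ∧ ∃ v : V, 2 ≤ deg G v ∧ C = {x : X | G.Adj (leaf x) v}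

set_option linter.unusedSectionVars false

section TreeLemmas

open SimpleGraph

variable [DecidableEq V] {G : SimpleGraph V}

noncomputable def thePath (hG : G.IsTree) (x y : V) : G.Walk x y :=
  (hG.existsUnique_path x y).exists.choose

lemma thePath_isPath (hG : G.IsTree) (x y : V) : (thePath hG x y).IsPath :=
  (hG.existsUnique_path x y).exists.choose_spec

lemma path_eq (hG : G.IsTree) {x y : V} (p : G.Walk x y) (hp : p.IsPath) : p = thePath hG x y :=
  (hG.existsUnique_path x y).unique hp (thePath_isPath hG x y)

lemma onPath_iff (hG : G.IsTree) {x y v : V} : OnPath G x y v ↔ v ∈ (thePath hG x y).support := by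
  constructor
  · exact fun h => h _ (thePath_isPath hG x y)
  · intro hv p hp; rwa [path_eq hG p hp]

lemma onPath_symm {x y v : V} (h : OnPath G x y v) : OnPath G y x v := by
  intro p hp
  have := h p.reverse hp.reverse
  simpa [Walk.support_reverse] using this

lemma onPath_start {x y : V} : OnPath G x y x := fun p _ => p.start_mem_support

lemma onPath_end {x y : V} : OnPath G x y y := fun p _ => p.end_mem_support

lemma takeUntil_eq (hG : G.IsTree) {x y m : V} (h : m ∈ (thePath hG x y).support) :
    (thePath hG x y).takeUntil m h = thePath hG x m :=
  path_eq hG _ ((thePath_isPath hG x y).takeUntil _)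

lemma dropUntil_eq (hG : G.IsTree) {x y m : V} (h : m ∈ (thePath hG x y).support) :
    (thePath hG x y).dropUntil m h = thePath hG m y :=
  path_eq hG _ ((thePath_isPath hG x y).dropUntil _)

lemma onPath_cases (hG : G.IsTree) {x y m v : V} (hm : OnPath G x y m) (hv : OnPath G x y v) :
    OnPath G x m v ∨ OnPath G m y v := by
  have hm' : m ∈ (thePath hG x y).support := (onPath_iff hG).1 hm
  have hv' : v ∈ (thePath hG x y).support := (onPath_iff hG).1 hv
  rw [← Walk.take_spec _ hm', Walk.mem_support_append_iff] at hv'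
  rcases hv' with h | h
  · left; rw [onPath_iff hG, ← takeUntil_eq hG hm']; exact h
  · right; rw [onPath_iff hG, ← dropUntil_eq hG hm']; exact h

lemma onPath_trans_left (hG : G.IsTree) {x y m v : V} (hm : OnPath G x y m) (hv : OnPath G x m v) :
    OnPath G x y v := by
  have hm' : m ∈ (thePath hG x y).support := (onPath_iff hG).1 hm
  have hv' : v ∈ (thePath hG x m).support := (onPath_iff hG).1 hv
  rw [onPath_iff hG]
  rw [← takeUntil_eq hG hm'] at hv'
  exact Walk.support_takeUntil_subset _ _ hv'

lemma onPath_trans_right (hG : G.IsTree) {x y m v : V} (hm : OnPath G x y m) (hv : OnPath G m y v) :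
    OnPath G x y v := by
  have hm' : m ∈ (thePath hG x y).support := (onPath_iff hG).1 hm
  have hv' : v ∈ (thePath hG m y).support := (onPath_iff hG).1 hv
  rw [onPath_iff hG]
  rw [← dropUntil_eq hG hm'] at hv'
  exact Walk.support_dropUntil_subset _ _ hv'

/-- The two halves of a path meet only at the splitting vertex. -/
lemma onPath_eq_of_both (hG : G.IsTree) {x y m v : V} (hm : OnPath G x y m)
    (h1 : OnPath G x m v) (h2 : OnPath G m y v) : v = m := by
  have hm' : m ∈ (thePath hG x y).support := (onPath_iff hG).1 hm
  have hnd : ((thePath hG x y).support).Nodup :=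
    (Walk.isPath_def _).1 (thePath_isPath hG x y)
  rw [← Walk.take_spec _ hm', Walk.support_append, List.nodup_append] at hnd
  obtain ⟨-, -, hdisj⟩ := hnd
  have hv1 : v ∈ ((thePath hG x y).takeUntil m hm').support := by
    rw [takeUntil_eq hG hm']; exact (onPath_iff hG).1 h1
  have hv2 : v ∈ ((thePath hG x y).dropUntil m hm').support := by
    rw [dropUntil_eq hG hm']; exact (onPath_iff hG).1 h2
  rw [Walk.support_eq_cons, List.mem_cons] at hv2
  rcases hv2 with h | h
  · exact h
  · exact absurd rfl (hdisj _ hv1 _ h)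

lemma onPath_antisymm (hG : G.IsTree) {x y m : V} (h1 : OnPath G x y m) (h2 : OnPath G x m y) : m = y :=
  (onPath_eq_of_both hG h1 h2 onPath_end).symm

lemma onPath_B7 (hG : G.IsTree) {x y m v : V} (hm : OnPath G x y m) (hv : OnPath G x m v) :
    OnPath G v y m := by
  have hm' : m ∈ (thePath hG x y).support := (onPath_iff hG).1 hm
  have hnd : ((thePath hG x y).support).Nodup :=
    (Walk.isPath_def _).1 (thePath_isPath hG x y)
  rw [← Walk.take_spec _ hm', Walk.support_append, List.nodup_append] at hnd
  obtain ⟨-, hnd2, hdisj⟩ := hnd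
  have hv' : v ∈ ((thePath hG x y).takeUntil m hm').support := by
    rw [takeUntil_eq hG hm']; exact (onPath_iff hG).1 hv
  have htpath : ((thePath hG x y).takeUntil m hm').IsPath :=
    (thePath_isPath hG x y).takeUntil _
  have hw : ((((thePath hG x y).takeUntil m hm').dropUntil v hv').append
      ((thePath hG x y).dropUntil m hm')).IsPath := by
    rw [Walk.isPath_def, Walk.support_append, List.nodup_append]
    refine ⟨(Walk.isPath_def _).1 (htpath.dropUntil _), hnd2, ?_⟩
    intro z hz1 w hz2 hzw
    subst hzw
    exact hdisj _ (Walk.support_dropUntil_subset _ _ hz1) _ hz2 rfl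
  have hmem : m ∈ ((((thePath hG x y).takeUntil m hm').dropUntil v hv').append
      ((thePath hG x y).dropUntil m hm')).support := by
    rw [Walk.mem_support_append_iff]; left; exact Walk.end_mem_support _
  rw [onPath_iff hG, ← path_eq hG _ hw]
  exact hmem

lemma onPath_B10 (hG : G.IsTree) {x y m v : V} (hm : OnPath G x y m) (hv : OnPath G m y v) :
    OnPath G x v m := by
  have hm' : m ∈ (thePath hG x y).support := (onPath_iff hG).1 hm
  have hnd : ((thePath hG x y).support).Nodup :=
    (Walk.isPath_def _).1 (thePath_isPath hG x y)
  rw [← Walk.take_spec _ hm', Walk.support_append, List.nodup_append] at hnd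
  obtain ⟨hnd1, -, hdisj⟩ := hnd
  have hdpath : ((thePath hG x y).dropUntil m hm').IsPath :=
    (thePath_isPath hG x y).dropUntil _
  have hv' : v ∈ ((thePath hG x y).dropUntil m hm').support := by
    rw [dropUntil_eq hG hm']; exact (onPath_iff hG).1 hv
  have hw : (((thePath hG x y).takeUntil m hm').append
      (((thePath hG x y).dropUntil m hm').takeUntil v hv')).IsPath := by
    rw [Walk.isPath_def, Walk.support_append, List.nodup_append]
    have hscons := (((thePath hG x y).dropUntil m hm').takeUntil v hv').support_eq_cons
    have hsnd := (Walk.isPath_def _).1 (hdpath.takeUntil hv')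
    rw [hscons, List.nodup_cons] at hsnd
    refine ⟨hnd1, hsnd.2, ?_⟩
    intro z hz1 w hz2 hzw
    subst hzw
    have hzs : z ∈ (((thePath hG x y).dropUntil m hm').takeUntil v hv').support := by
      rw [hscons]; exact List.mem_cons_of_mem _ hz2
    have hzm : z ≠ m := fun h => hsnd.1 (h ▸ hz2)
    have hzd : z ∈ ((thePath hG x y).dropUntil m hm').support :=
      Walk.support_takeUntil_subset _ _ hzs
    rw [Walk.support_eq_cons, List.mem_cons] at hzd
    rcases hzd with h | h
    · exact hzm h
    · exact hdisj _ hz1 _ h rfl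
  have hmem : m ∈ (((thePath hG x y).takeUntil m hm').append
      (((thePath hG x y).dropUntil m hm').takeUntil v hv')).support := by
    rw [Walk.mem_support_append_iff]; left; exact Walk.end_mem_support _
  rw [onPath_iff hG, ← path_eq hG _ hw]
  exact hmem

lemma onPath_B9 (hG : G.IsTree) {z p q u : V} (h1 : OnPath G z q p) (h2 : OnPath G p u q) (hne : p ≠ q) :
    OnPath G z u q := by
  have hs2cons := (thePath hG q u).support_eq_cons
  have hs2nd := (Walk.isPath_def _).1 (thePath_isPath hG q u)
  rw [hs2cons, List.nodup_cons] at hs2nd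
  have hw : ((thePath hG z q).append (thePath hG q u)).IsPath := by
    rw [Walk.isPath_def, Walk.support_append, List.nodup_append]
    refine ⟨(Walk.isPath_def _).1 (thePath_isPath hG z q), hs2nd.2, ?_⟩
    intro v hv1 w hv2 hvw
    subst hvw
    have hvq : v ≠ q := fun h => hs2nd.1 (h ▸ hv2)
    have hvz : OnPath G z q v := (onPath_iff hG).2 hv1
    have hvu : OnPath G q u v := (onPath_iff hG).2
      (by rw [hs2cons]; exact List.mem_cons_of_mem _ hv2)
    rcases onPath_cases hG h1 hvz with hc | hc
    · -- hc : OnPath z p v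
      have h3 : OnPath G v q p := onPath_B7 hG h1 hc
      have h4 : OnPath G q u p := onPath_trans_left hG hvu (onPath_symm h3)
      exact hne (onPath_antisymm hG (onPath_symm h2) (onPath_symm h4)).symm
    · -- hc : OnPath p q v
      exact hvq (onPath_eq_of_both hG h2 hc hvu)
  have hmem : q ∈ ((thePath hG z q).append (thePath hG q u)).support := by
    rw [Walk.mem_support_append_iff]; left; exact Walk.end_mem_support _
  rw [onPath_iff hG, ← path_eq hG _ hw]
  exact hmem

lemma IsMedian.comm12 {x y z m : V} (h : IsMedian G x y z m) : IsMedian G y x z m :=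
  ⟨onPath_symm h.1, h.2.2, h.2.1⟩

lemma IsMedian.comm23 {x y z m : V} (h : IsMedian G x y z m) : IsMedian G x z y m :=
  ⟨h.2.2, onPath_symm h.2.1, h.1⟩

lemma isMedian_unique (hG : G.IsTree) {x y z m m' : V} (h : IsMedian G x y z m)
    (h' : IsMedian G x y z m') : m = m' := by
  rcases onPath_cases hG h.1 h'.1 with hc | hc
  · rcases onPath_cases hG h.2.1 h'.2.1 with hd | hd
    · exact (onPath_eq_of_both hG h.1 hc (onPath_symm hd)).symm
    · exact (onPath_eq_of_both hG h.2.2 hc hd).symm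
  · rcases onPath_cases hG h.2.2 h'.2.2 with hd | hd
    · exact (onPath_eq_of_both hG h.1 hd hc).symm
    · exact (onPath_eq_of_both hG h.2.1 (onPath_symm hc) hd).symm

lemma exists_isMedian_aux (hG : G.IsTree) : ∀ {x y : V} (p : G.Walk x y), p.IsPath →
    ∀ z : V, ∃ m : V, IsMedian G x y z m := by
  intro x y p
  induction p with
  | nil => exact fun _ z => ⟨_, onPath_start, onPath_start, onPath_start⟩
  | @cons x x' y h p ih =>
    intro hp z
    rw [Walk.cons_isPath_iff] at hp
    obtain ⟨m', hm'⟩ := ih hp.1 z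
    have hm'p : m' ∈ p.support := hm'.1 p hp.1
    have hm'xy : OnPath G x y m' := by
      intro w hw
      have hww : w = Walk.cons h p :=
        (path_eq hG w hw).trans (path_eq hG _ ((Walk.cons_isPath_iff _ _).2 hp)).symm
      rw [hww, Walk.support_cons]
      exact List.mem_cons_of_mem _ hm'p
    by_cases hxs : x ∈ (thePath hG x' z).support
    · have hR : OnPath G x' z x := (onPath_iff hG).2 hxs
      by_cases hmx : m' = x'
      · exact ⟨x, onPath_start, onPath_trans_right hG (hmx ▸ hm'.2.1) hR, onPath_start⟩
      · refine ⟨m', hm'xy, hm'.2.1, ?_⟩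
        rcases onPath_cases hG hR hm'.2.2 with hc | hc
        · exfalso
          have hedge : (Walk.cons h.symm Walk.nil : G.Walk x' x).IsPath := by
            rw [Walk.cons_isPath_iff]
            refine ⟨Walk.IsPath.nil, ?_⟩
            simp only [Walk.support_nil, List.mem_singleton]
            exact h.ne'
          have hmem := hc _ hedge
          simp only [Walk.support_cons, Walk.support_nil, List.mem_cons,
            List.mem_singleton] at hmem
          rcases hmem with h1 | h1 | h1
          · exact hmx h1
          · exact hp.2 (h1 ▸ hm'p)
          · exact absurd h1 List.not_mem_nil
        · exact hc
    · have hL : OnPath G x z x' := by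
        have hcons : (Walk.cons h (thePath hG x' z)).IsPath :=
          (Walk.cons_isPath_iff _ _).2 ⟨thePath_isPath hG x' z, hxs⟩
        rw [onPath_iff hG, ← path_eq hG _ hcons, Walk.support_cons]
        exact List.mem_cons_of_mem _ (thePath hG x' z).start_mem_support
      exact ⟨m', hm'xy, hm'.2.1, onPath_trans_right hG hL hm'.2.2⟩

lemma exists_isMedian (hG : G.IsTree) (x y z : V) : ∃ m : V, IsMedian G x y z m :=
  exists_isMedian_aux hG (thePath hG x y) (thePath_isPath hG x y) z

/-- Gate property: the median of `x,y,u` lies on the path from `u` to any vertex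
of the path from `x` to `y`. -/
lemma gate (hG : G.IsTree) {x y u q w : V} (hq : IsMedian G x y u q) (hw : OnPath G x y w) :
    OnPath G u w q := by
  rcases onPath_cases hG hq.1 hw with hc | hc
  · exact onPath_symm (onPath_B7 hG hq.2.2 hc)
  · exact onPath_symm (onPath_B7 hG hq.2.1 (onPath_symm hc))

/-- In a strict quartet, `p = med(x,y,z)` lies between `x` and `q = med(x,z,u)`. -/
lemma sep_lemma (hG : G.IsTree) {x y z u p q : V} (hpz : IsMedian G x y z p)
    (hqx : IsMedian G x z u q) (hqy : IsMedian G y z u q) (hne : p ≠ q) :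
    OnPath G x q p := by
  rcases onPath_cases hG hpz.2.2 hqx.1 with hc | hc
  · exact absurd (isMedian_unique hG hpz
      ⟨onPath_trans_left hG hpz.1 hc, hqy.1, hqx.1⟩) hne
  · exact onPath_B10 hG hpz.2.2 hc

/-- If `med(x,y,z) = med(x,y,u) = p` then `med(x,z,u) = med(y,z,u)`. -/
lemma quartet_eq (hG : G.IsTree) {x y z u p r s : V} (hp : IsMedian G x y z p)
    (hq : IsMedian G x y u p) (hr : IsMedian G x z u r) (hs : IsMedian G y z u s) :
    r = s := by
  have hrp : r = p → r = s := by
    intro hh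
    subst hh
    exact isMedian_unique hG ⟨hp.2.1, hr.2.1, hq.2.1⟩ hs
  rcases onPath_cases hG hp.2.2 hr.1 with hL | hZ
  · rcases onPath_cases hG hq.2.2 hr.2.2 with hL' | hU
    · -- r on path x–p twice: gates
      have hxyr : OnPath G x y r := onPath_trans_left hG hp.1 hL
      have g1 : OnPath G z r p := gate hG hp hxyr
      have g2 : OnPath G u r p := gate hG hq hxyr
      exact hrp (onPath_eq_of_both hG hr.2.1 g1 (onPath_symm g2)).symm
    · exact hrp (onPath_eq_of_both hG hq.2.2 hL hU)
  · rcases onPath_cases hG hq.2.2 hr.2.2 with hL' | hU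
    · exact hrp (onPath_eq_of_both hG hp.2.2 hL' hZ)
    · -- r median of (y,z,u)
      refine isMedian_unique hG (⟨?_, hr.2.1, ?_⟩ : IsMedian G y z u r) hs
      · exact onPath_trans_right hG hp.2.1 hZ
      · exact onPath_trans_right hG hq.2.1 hU

lemma quartet_aux (hG : G.IsTree) {x y z u p q r s : V} (hp : IsMedian G x y z p)
    (hq : IsMedian G x y u q) (hr : IsMedian G x z u r) (hs : IsMedian G y z u s)
    (hne : p ≠ q) (hxq : OnPath G x p q) : r = q ∧ s = p := by
  have hxzq : OnPath G x z q := onPath_trans_left hG hp.2.2 hxq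
  have hxyq : OnPath G x y q := onPath_trans_left hG hp.1 hxq
  have hzqp : OnPath G z q p := gate hG hp hxyq
  have hpuq : OnPath G p u q := onPath_symm (gate hG hq hp.1)
  have hzuq : OnPath G z u q := onPath_B9 hG hzqp hpuq hne
  have hrq : r = q := isMedian_unique hG hr ⟨hxzq, hzuq, hq.2.2⟩
  have hyqp : OnPath G y q p := onPath_B10 hG (onPath_symm hp.1) (onPath_symm hxq)
  have hyup : OnPath G y u p := onPath_trans_left hG hq.2.1 hyqp
  have hzup : OnPath G z u p := onPath_trans_left hG hzuq hzqp
  exact ⟨hrq, isMedian_unique hG hs ⟨hp.2.1, hzup, hyup⟩⟩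

/-- Four-point (quartet) lemma: the four medians of a quadruple pair up. -/
lemma quartet (hG : G.IsTree) {x y z u p q r s : V} (hp : IsMedian G x y z p)
    (hq : IsMedian G x y u q) (hr : IsMedian G x z u r) (hs : IsMedian G y z u s) :
    (p = q ∧ r = s) ∨ (p = r ∧ q = s) ∨ (p = s ∧ q = r) := by
  by_cases hpq : p = q
  · have hq' : IsMedian G x y u p := by rw [hpq]; exact hq
    exact Or.inl ⟨hpq, quartet_eq hG hp hq' hr hs⟩
  · rcases onPath_cases hG hp.1 hq.1 with hc | hc
    · obtain ⟨h1, h2⟩ := quartet_aux hG hp hq hr hs hpq hc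
      exact Or.inr (Or.inr ⟨h2.symm, h1.symm⟩)
    · obtain ⟨h1, h2⟩ := quartet_aux hG hp.comm12 hq.comm12 hs hr hpq (onPath_symm hc)
      exact Or.inr (Or.inl ⟨h2.symm, h1.symm⟩)

/-- Saturation (five-point) lemma. -/
lemma saturation (hG : G.IsTree) {x y z u v p q m1 m2 m3 m4 m5 m6 : V}
    (hpz : IsMedian G x y z p) (hpu : IsMedian G x y u p)
    (hqx : IsMedian G x z u q) (hqy : IsMedian G y z u q) (hne : p ≠ q)
    (h1 : IsMedian G x v z m1) (h2 : IsMedian G x v u m2) (h3 : IsMedian G v z u m3)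
    (h4 : IsMedian G x y v m4) (h5 : IsMedian G x z v m5) (h6 : IsMedian G y z v m6) :
    (m1 = m2 ∧ q = m3) ∨ (p = m4 ∧ m5 = m6) := by
  have Sx : OnPath G x q p := sep_lemma hG hpz hqx hqy hne
  have Sy : OnPath G y q p := sep_lemma hG hpz.comm12 hqy hqx hne
  have Sz : OnPath G z p q :=
    sep_lemma hG (hqx.comm12.comm23) (hpz.comm23.comm12) (hpu.comm23.comm12) (Ne.symm hne)
  have Su : OnPath G u p q :=
    sep_lemma hG (hqx.comm23.comm12.comm23) (hpu.comm23.comm12) (hpz.comm23.comm12) (Ne.symm hne)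
  obtain ⟨r, hr⟩ := exists_isMedian hG p q v
  by_cases hrq : r = q
  · right
    have hpvq : OnPath G p v q := hrq ▸ hr.2.2
    have hxvq : OnPath G x v q := onPath_B9 hG Sx hpvq hne
    have hyvq : OnPath G y v q := onPath_B9 hG Sy hpvq hne
    have hp4 : p = m4 := isMedian_unique hG
      ⟨hpz.1, onPath_trans_left hG hyvq Sy, onPath_trans_left hG hxvq Sx⟩ h4
    obtain ⟨c, hc⟩ := exists_isMedian hG z v q
    have h5c : m5 = c := isMedian_unique hG h5
      ⟨onPath_trans_right hG hqx.1 (onPath_symm hc.2.2), hc.1,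
       onPath_trans_right hG hxvq (onPath_symm hc.2.1)⟩
    have h6c : m6 = c := isMedian_unique hG h6
      ⟨onPath_trans_right hG hqy.1 (onPath_symm hc.2.2), hc.1,
       onPath_trans_right hG hyvq (onPath_symm hc.2.1)⟩
    exact ⟨hp4, h5c.trans h6c.symm⟩
  · left
    have hSrz : OnPath G r z q := onPath_B7 hG (onPath_symm Sz) hr.1
    have hSru : OnPath G r u q := onPath_B7 hG (onPath_symm Su) hr.1
    have hvzq : OnPath G v z q := onPath_B9 hG (onPath_symm hr.2.1) hSrz hrq
    have hvuq : OnPath G v u q := onPath_B9 hG (onPath_symm hr.2.1) hSru hrq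
    have hq3 : q = m3 := isMedian_unique hG ⟨hvzq, hqx.2.1, hvuq⟩ h3
    obtain ⟨c, hc⟩ := exists_isMedian hG x v q
    have h1c : m1 = c := isMedian_unique hG h1
      ⟨hc.1, onPath_trans_left hG hvzq hc.2.1, onPath_trans_left hG hqx.1 hc.2.2⟩
    have h2c : m2 = c := isMedian_unique hG h2
      ⟨hc.1, onPath_trans_left hG hvuq hc.2.1, onPath_trans_left hG hqx.2.2 hc.2.2⟩
    exact ⟨h1c.trans h2c.symm, hq3⟩

end TreeLemmas

def rset5 : Fin 10 → Finset (Fin 5) :=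
  ![{0,1,2},{0,1,3},{0,1,4},{0,2,3},{0,2,4},{0,3,4},{1,2,3},{1,2,4},{1,3,4},{2,3,4}]

def enc5 (i j k : Fin 5) : Fin 10 :=
  let s := 2 ^ i.val + 2 ^ j.val + 2 ^ k.val
  if s = 7 then 0 else if s = 11 then 1 else if s = 19 then 2 else if s = 13 then 3
  else if s = 21 then 4 else if s = 25 then 5 else if s = 14 then 6 else if s = 22 then 7
  else if s = 26 then 8 else 9

def evenClauseB (b : Fin 10 → Bool) (q : Fin 5 × Fin 5 × Fin 5 × Fin 5) : Bool :=
  (b (enc5 q.1 q.2.1 q.2.2.1) == b (enc5 q.1 q.2.1 q.2.2.2) &&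
     b (enc5 q.1 q.2.2.1 q.2.2.2) == b (enc5 q.2.1 q.2.2.1 q.2.2.2)) ||
  (b (enc5 q.1 q.2.1 q.2.2.1) == b (enc5 q.1 q.2.2.1 q.2.2.2) &&
     b (enc5 q.1 q.2.1 q.2.2.2) == b (enc5 q.2.1 q.2.2.1 q.2.2.2)) ||
  (b (enc5 q.1 q.2.1 q.2.2.1) == b (enc5 q.2.1 q.2.2.1 q.2.2.2) &&
     b (enc5 q.1 q.2.1 q.2.2.2) == b (enc5 q.1 q.2.2.1 q.2.2.2))

def satClauseB (b : Fin 10 → Bool) (t : Fin 5 × Fin 5 × Fin 5 × Fin 5 × Fin 5) : Bool :=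
  let i := t.1; let j := t.2.1; let k := t.2.2.1; let l := t.2.2.2.1; let n := t.2.2.2.2
  !(b (enc5 i j k) == b (enc5 i j l) && b (enc5 i k l) == b (enc5 j k l) &&
    b (enc5 i j k) != b (enc5 i k l)) ||
  ((b (enc5 i n k) == b (enc5 i n l) && b (enc5 i k l) == b (enc5 n k l)) ||
   (b (enc5 i j k) == b (enc5 i j n) && b (enc5 i k n) == b (enc5 j k n)))

def quartList : List (Fin 5 × Fin 5 × Fin 5 × Fin 5) :=
  [(0,1,2,3),(0,1,2,4),(0,1,3,4),(0,2,3,4),(1,2,3,4)]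

def satList : List (Fin 5 × Fin 5 × Fin 5 × Fin 5 × Fin 5) :=
  [(0,1,2,3,4),(0,1,2,4,3),(0,1,3,2,4),(0,1,3,4,2),(0,1,4,2,3),(0,1,4,3,2),(0,2,1,3,4),(0,2,1,4,3),(0,2,3,1,4),(0,2,3,4,1),(0,2,4,1,3),(0,2,4,3,1),(0,3,1,2,4),(0,3,1,4,2),(0,3,2,1,4),(0,3,2,4,1),(0,3,4,1,2),(0,3,4,2,1),(0,4,1,2,3),(0,4,1,3,2),(0,4,2,1,3),(0,4,2,3,1),(0,4,3,1,2),(0,4,3,2,1),(1,0,2,3,4),(1,0,2,4,3),(1,0,3,2,4),(1,0,3,4,2),(1,0,4,2,3),(1,0,4,3,2),(1,2,0,3,4),(1,2,0,4,3),(1,2,3,0,4),(1,2,3,4,0),(1,2,4,0,3),(1,2,4,3,0),(1,3,0,2,4),(1,3,0,4,2),(1,3,2,0,4),(1,3,2,4,0),(1,3,4,0,2),(1,3,4,2,0),(1,4,0,2,3),(1,4,0,3,2),(1,4,2,0,3),(1,4,2,3,0),(1,4,3,0,2),(1,4,3,2,0),(2,0,1,3,4),(2,0,1,4,3),(2,0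,3,1,4),(2,0,3,4,1),(2,0,4,1,3),(2,0,4,3,1),(2,1,0,3,4),(2,1,0,4,3),(2,1,3,0,4),(2,1,3,4,0),(2,1,4,0,3),(2,1,4,3,0),(2,3,0,1,4),(2,3,0,4,1),(2,3,1,0,4),(2,3,1,4,0),(2,3,4,0,1),(2,3,4,1,0),(2,4,0,1,3),(2,4,0,3,1),(2,4,1,0,3),(2,4,1,3,0),(2,4,3,0,1),(2,4,3,1,0),(3,0,1,2,4),(3,0,1,4,2),(3,0,2,1,4),(3,0,2,4,1),(3,0,4,1,2),(3,0,4,2,1),(3,1,0,2,4),(3,1,0,4,2),(3,1,2,0,4),(3,1,2,4,0),(3,1,4,0,2),(3,1,4,2,0),(3,2,0,1,4),(3,2,0,4,1),(3,2,1,0,4),(3,2,1,4,0),(3,2,4,0,1),(3,2,4,1,0),(3,4,0,1,2),(3,4,0,2,1),(3,4,1,0,2),(3,4,1,2,0),(3,4,2,0,1),(3,4,2,1,0),(4,0,1,2,3),(4,0,1,3,2),(4,0,2,1,3),(4,0,2,3,1),(4,0,3,1,2),(4,0,3,2,1),(4,1,0,2,3),(4,1,0,3,2),(4,1,2,0,3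),(4,1,2,3,0),(4,1,3,0,2),(4,1,3,2,0),(4,2,0,1,3),(4,2,0,3,1),(4,2,1,0,3),(4,2,1,3,0),(4,2,3,0,1),(4,2,3,1,0),(4,3,0,1,2),(4,3,0,2,1),(4,3,1,0,2),(4,3,1,2,0),(4,3,2,0,1),(4,3,2,1,0)]

def allClausesB (b : Fin 10 → Bool) : Bool :=
  quartList.all (evenClauseB b) && satList.all (satClauseB b)

set_option maxRecDepth 10000 in
theorem core5aux : ∀ b0 b1 b2 b3 b4 b5 b6 b7 b8 b9 : Bool,
    ¬((Finset.univ.filter fun n : Fin 10 =>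
        ![b0, b1, b2, b3, b4, b5, b6, b7, b8, b9] n = true).card = 5 ∧
      allClausesB ![b0, b1, b2, b3, b4, b5, b6, b7, b8, b9] = true) := by decide

theorem core5 (b : Fin 10 → Bool)
    (h1 : (Finset.univ.filter fun n : Fin 10 => b n = true).card = 5)
    (h2 : ∀ q ∈ quartList, evenClauseB b q = true)
    (h3 : ∀ t ∈ satList, satClauseB b t = true) : False := by
  have hb : b = ![b 0, b 1, b 2, b 3, b 4, b 5, b 6, b 7, b 8, b 9] := by
    funext n; fin_cases n <;> rfl
  refine core5aux (b 0) (b 1) (b 2) (b 3) (b 4) (b 5) (b 6) (b 7) (b 8) (b 9) ⟨?_, ?_⟩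
  · rw [← hb]; exact h1
  · rw [allClausesB, Bool.and_eq_true, List.all_eq_true, List.all_eq_true]
    rw [← hb]
    exact ⟨h2, h3⟩

theorem evenPropToBool (x1 x2 x3 x4 : Bool)
    (h : (x1 = x2 ∧ x3 = x4) ∨ (x1 = x3 ∧ x2 = x4) ∨ (x1 = x4 ∧ x2 = x3)) :
    ((x1 == x2 && x3 == x4) || (x1 == x3 && x2 == x4) || (x1 == x4 && x2 == x3)) = true := by
  revert h; revert x1 x2 x3 x4; decide

theorem satPropToBool (x1 x2 x3 x4 y1 y2 y3 y4 z1 z2 z3 z4 : Bool)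
    (h : (x1 = x2 ∧ x3 = x4 ∧ x1 ≠ x3) → ((y1 = y2 ∧ y3 = y4) ∨ (z1 = z2 ∧ z3 = z4))) :
    (!(x1 == x2 && x3 == x4 && x1 != x3) ||
      ((y1 == y2 && y3 == y4) || (z1 == z2 && z3 == z4))) = true := by
  revert h; revert x1 x2 x3 x4 y1 y2 y3 y4 z1 z2 z3 z4; decide


/-- No 5-element subset of `X` is 5-5 partitioned by the ternary map
induced by a discriminating symbolically dated phylogenetic tree. -/
theorem induced_delta_no_five_five_partition
    {V X M : Type} [Fintype V] [Fintype X] [DecidableEq X] [Fintype M] [Nonempty M]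
    (hX : 3 ≤ Fintype.card X)
    (G : SimpleGraph V) (leaf : X → V) (t : V → Option M)
    (hT : IsPhyloTree G leaf) (ht : IsDatingMap leaf t) (hdisc : Discriminating G t)
    (δ : X → X → X → Option M) (hδ : InducedDelta G leaf t δ) :
    ∀ S : Finset X, S.card = 5 → ¬ Partitioned δ S 5 5 := by
  classical
  intro S hS hPart
  obtain ⟨a, b, hab, hncA, hncB, hcov⟩ := hPart
  have hG : G.IsTree := hT.isTree
  -- symmetry of δ
  have hs12 : ∀ x y z : X, δ x y z = δ y x z := fun x y z => by
    obtain ⟨m, hm, hem⟩ := hδ x y z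
    obtain ⟨m', hm', hem'⟩ := hδ y x z
    rw [hem, hem', isMedian_unique hG hm hm'.comm12]
  have hs23 : ∀ x y z : X, δ x y z = δ x z y := fun x y z => by
    obtain ⟨m, hm, hem⟩ := hδ x y z
    obtain ⟨m', hm', hem'⟩ := hδ x z y
    rw [hem, hem', isMedian_unique hG hm hm'.comm23]
  -- enumeration of S by Fin 5
  have hcard : Fintype.card S = 5 := by rw [Fintype.card_coe]; exact hS
  let φ : ↥S ≃ Fin 5 := Fintype.equivFinOfCardEq hcard
  let e : Fin 5 → X := fun i => (φ.symm i : X)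
  have he_inj : Function.Injective e := fun i j hij => φ.symm.injective (Subtype.ext hij)
  have heS : ∀ i, e i ∈ S := fun i => (φ.symm i).2
  have hne : ∀ {i j : Fin 5}, i ≠ j → e i ≠ e j := fun hij hc => hij (he_inj hc)
  have hSim : S = Finset.univ.image e := by
    apply Finset.Subset.antisymm
    · intro s hs
      refine Finset.mem_image.2 ⟨φ ⟨s, hs⟩, Finset.mem_univ _, ?_⟩
      show (φ.symm (φ ⟨s, hs⟩) : X) = s
      rw [Equiv.symm_apply_apply]
    · intro s hs
      obtain ⟨i, -, rfl⟩ := Finset.mem_image.1 hs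
      exact heS i
  -- evaluation of ValOn on explicit triples
  have hvalOn : ∀ (x y z : X), x ≠ y → x ≠ z → y ≠ z → ∀ c : Option M,
      (ValOn δ ({x, y, z} : Finset X) c ↔ δ x y z = c) := by
    intro x y z hxy hxz hyz c
    constructor
    · rintro ⟨x', y', z', h1, h2, h3, hT, hv⟩
      have hx' : x' = x ∨ x' = y ∨ x' = z := by
        have hm : x' ∈ ({x, y, z} : Finset X) := by rw [hT]; simp
        simpa using hm
      have hy' : y' = x ∨ y' = y ∨ y' = z := by
        have hm : y' ∈ ({x, y, z} : Finset X) := by rw [hT]; simp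
        simpa using hm
      have hz' : z' = x ∨ z' = y ∨ z' = z := by
        have hm : z' ∈ ({x, y, z} : Finset X) := by rw [hT]; simp
        simpa using hm
      rcases hx' with h1' | h1' | h1' <;> rcases hy' with h2' | h2' | h2' <;>
        rcases hz' with h3' | h3' | h3' <;> rw [h1', h2', h3'] at hv <;>
        first
          | exact absurd (h1'.trans h2'.symm) h1
          | exact absurd (h1'.trans h3'.symm) h2
          | exact absurd (h2'.trans h3'.symm) h3
          | exact hv
          | (rw [hs12]; exact hv)
          | (rw [hs23]; exact hv)
          | (rw [hs12, hs23]; exact hv)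
          | (rw [hs23, hs12]; exact hv)
          | (rw [hs12, hs23, hs12]; exact hv)
    · intro h; exact ⟨x, y, z, hxy, hxz, hyz, rfl, h⟩
  -- the boolean table
  let B : Fin 10 → Bool := fun n => if ValOn δ ((rset5 n).image e) a then true else false
  have hrs : ∀ i j k : Fin 5, i ≠ j → i ≠ k → j ≠ k →
      rset5 (enc5 i j k) = ({i, j, k} : Finset (Fin 5)) := by decide
  have hBtrue : ∀ i j k : Fin 5, i ≠ j → i ≠ k → j ≠ k →
      (B (enc5 i j k) = true ↔ δ (e i) (e j) (e k) = a) := by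
    intro i j k hij hik hjk
    have himg : ((rset5 (enc5 i j k)).image e) = ({e i, e j, e k} : Finset X) := by
      rw [hrs i j k hij hik hjk]
      simp [Finset.image_insert]
    show (if ValOn δ ((rset5 (enc5 i j k)).image e) a then true else false) = true ↔ _
    rw [himg]
    by_cases hv : ValOn δ ({e i, e j, e k} : Finset X) a
    · simp only [if_pos hv, true_iff]
      exact (hvalOn _ _ _ (hne hij) (hne hik) (hne hjk) a).1 hv
    · simp only [if_neg hv]
      exact ⟨fun h => absurd h Bool.false_ne_true,
        fun h => absurd ((hvalOn _ _ _ (hne hij) (hne hik) (hne hjk) a).2 h) hv⟩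
  have hcov' : ∀ i j k : Fin 5, i ≠ j → i ≠ k → j ≠ k →
      δ (e i) (e j) (e k) = a ∨ δ (e i) (e j) (e k) = b := by
    intro i j k hij hik hjk
    have hmem : ({e i, e j, e k} : Finset X) ∈ S.powersetCard 3 := by
      rw [Finset.mem_powersetCard]
      constructor
      · intro w hw
        simp only [Finset.mem_insert, Finset.mem_singleton] at hw
        rcases hw with rfl | rfl | rfl
        exacts [heS i, heS j, heS k]
      · exact Finset.card_eq_three.2 ⟨_, _, _, hne hij, hne hik, hne hjk, rfl⟩
    rcases hcov _ hmem with h | h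
    · exact Or.inl ((hvalOn _ _ _ (hne hij) (hne hik) (hne hjk) a).1 h)
    · exact Or.inr ((hvalOn _ _ _ (hne hij) (hne hik) (hne hjk) b).1 h)
  have hBfalse : ∀ i j k : Fin 5, i ≠ j → i ≠ k → j ≠ k →
      B (enc5 i j k) = false → δ (e i) (e j) (e k) = b := by
    intro i j k hij hik hjk hfalse
    rcases hcov' i j k hij hik hjk with h | h
    · rw [(hBtrue i j k hij hik hjk).2 h] at hfalse
      exact absurd hfalse (by simp)
    · exact h
  have hBeq : ∀ i j k i' j' k' : Fin 5, i ≠ j → i ≠ k → j ≠ k → i' ≠ j' → i' ≠ k' → j' ≠ k' →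
      δ (e i) (e j) (e k) = δ (e i') (e j') (e k') → B (enc5 i j k) = B (enc5 i' j' k') := by
    intro i j k i' j' k' d1 d2 d3 d4 d5 d6 hval
    cases hb2 : B (enc5 i' j' k') with
    | true => exact (hBtrue i j k d1 d2 d3).2 (hval.trans ((hBtrue i' j' k' d4 d5 d6).1 hb2))
    | false =>
      cases hb1 : B (enc5 i j k) with
      | false => rfl
      | true =>
        exfalso
        have hv1 : δ (e i) (e j) (e k) = a := (hBtrue i j k d1 d2 d3).1 hb1
        have hv2 : δ (e i') (e j') (e k') = b := hBfalse i' j' k' d4 d5 d6 hb2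
        exact hab (hv1.symm.trans (hval.trans hv2))
  -- quartet clauses
  have hevenGen : ∀ i j k l : Fin 5,
      (i ≠ j ∧ i ≠ k ∧ i ≠ l ∧ j ≠ k ∧ j ≠ l ∧ k ≠ l) →
      evenClauseB B (i, j, k, l) = true := by
    intro i j k l hd
    obtain ⟨d1, d2, d3, d4, d5, d6⟩ := hd
    obtain ⟨p1, hp1, he1⟩ := hδ (e i) (e j) (e k)
    obtain ⟨p2, hp2, he2⟩ := hδ (e i) (e j) (e l)
    obtain ⟨p3, hp3, he3⟩ := hδ (e i) (e k) (e l)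
    obtain ⟨p4, hp4, he4⟩ := hδ (e j) (e k) (e l)
    refine evenPropToBool _ _ _ _ ?_
    rcases quartet hG hp1 hp2 hp3 hp4 with ⟨h1, h2⟩ | ⟨h1, h2⟩ | ⟨h1, h2⟩
    · exact Or.inl ⟨hBeq i j k i j l d1 d2 d4 d1 d3 d5 (by rw [he1, he2, h1]),
        hBeq i k l j k l d2 d3 d6 d4 d5 d6 (by rw [he3, he4, h2])⟩
    · exact Or.inr (Or.inl ⟨hBeq i j k i k l d1 d2 d4 d2 d3 d6 (by rw [he1, he3, h1]),
        hBeq i j l j k l d1 d3 d5 d4 d5 d6 (by rw [he2, he4, h2])⟩)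
    · exact Or.inr (Or.inr ⟨hBeq i j k j k l d1 d2 d4 d4 d5 d6 (by rw [he1, he4, h1]),
        hBeq i j l i k l d1 d3 d5 d2 d3 d6 (by rw [he2, he3, h2])⟩)
  -- saturation clauses
  have hsatGen : ∀ i j k l n : Fin 5,
      (i ≠ j ∧ i ≠ k ∧ i ≠ l ∧ i ≠ n ∧ j ≠ k ∧ j ≠ l ∧ j ≠ n ∧ k ≠ l ∧ k ≠ n ∧ l ≠ n) →
      satClauseB B (i, j, k, l, n) = true := by
    intro i j k l n hd
    obtain ⟨d1, d2, d3, d4, d5, d6, d7, d8, d9, d10⟩ := hd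
    refine satPropToBool _ _ _ _ _ _ _ _ _ _ _ _ ?_
    rintro ⟨hb12, hb34, hb13⟩
    obtain ⟨p1, hp1, he1⟩ := hδ (e i) (e j) (e k)
    obtain ⟨p2, hp2, he2⟩ := hδ (e i) (e j) (e l)
    obtain ⟨p3, hp3, he3⟩ := hδ (e i) (e k) (e l)
    obtain ⟨p4, hp4, he4⟩ := hδ (e j) (e k) (e l)
    have hv13 : δ (e i) (e j) (e k) ≠ δ (e i) (e k) (e l) := by
      cases hbt : B (enc5 i j k) with
      | true =>
        have h3f : B (enc5 i k l) = false := by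
          cases h : B (enc5 i k l) with
          | false => rfl
          | true => exact absurd (hbt.trans h.symm) hb13
        rw [(hBtrue i j k d1 d2 d5).1 hbt, hBfalse i k l d2 d3 d8 h3f]
        exact hab
      | false =>
        have h3t : B (enc5 i k l) = true := by
          cases h : B (enc5 i k l) with
          | true => rfl
          | false => exact absurd (hbt.trans h.symm) hb13
        rw [hBfalse i j k d1 d2 d5 hbt, (hBtrue i k l d2 d3 d8).1 h3t]
        exact fun hh => hab hh.symm
    have hp12 : p1 = p2 ∧ p3 = p4 := by
      rcases quartet hG hp1 hp2 hp3 hp4 with h | ⟨h1, h2⟩ | ⟨h1, h2⟩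
      · exact h
      · exact absurd (by rw [he1, he3, h1]) hv13
      · exact absurd (by rw [he2, he3, h2] : δ (e i) (e j) (e l) = δ (e i) (e k) (e l))
          (fun hh => hv13 (by
            have hv12 : δ (e i) (e j) (e k) = δ (e i) (e j) (e l) := by
              cases hbt : B (enc5 i j k) with
              | true => rw [(hBtrue i j k d1 d2 d5).1 hbt,
                  (hBtrue i j l d1 d3 d6).1 (hb12 ▸ hbt)]
              | false => rw [hBfalse i j k d1 d2 d5 hbt,
                  hBfalse i j l d1 d3 d6 (hb12 ▸ hbt)]
            exact hv12.trans hh))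
    have hne13 : p1 ≠ p3 := fun h => hv13 (by rw [he1, he3, h])
    have hp2' : IsMedian G (leaf (e i)) (leaf (e j)) (leaf (e l)) p1 := by
      rw [hp12.1]; exact hp2
    have hp4' : IsMedian G (leaf (e j)) (leaf (e k)) (leaf (e l)) p3 := by
      rw [hp12.2]; exact hp4
    obtain ⟨m1, hm1, hf1⟩ := hδ (e i) (e n) (e k)
    obtain ⟨m2, hm2, hf2⟩ := hδ (e i) (e n) (e l)
    obtain ⟨m3, hm3, hf3⟩ := hδ (e n) (e k) (e l)
    obtain ⟨m4, hm4, hf4⟩ := hδ (e i) (e j) (e n)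
    obtain ⟨m5, hm5, hf5⟩ := hδ (e i) (e k) (e n)
    obtain ⟨m6, hm6, hf6⟩ := hδ (e j) (e k) (e n)
    rcases saturation hG hp1 hp2' hp3 hp4' hne13 hm1 hm2 hm3 hm4 hm5 hm6 with
      ⟨hA, hB⟩ | ⟨hA, hB⟩
    · exact Or.inl ⟨hBeq i n k i n l d4 d2 (Ne.symm d9) d4 d3 (Ne.symm d10)
          (by rw [hf1, hf2, hA]),
        hBeq i k l n k l d2 d3 d8 (Ne.symm d9) (Ne.symm d10) d8
          (by rw [he3, hf3, ← hB])⟩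
    · exact Or.inr ⟨hBeq i j k i j n d1 d2 d5 d1 d4 d7 (by rw [he1, hf4, ← hA]),
        hBeq i k n j k n d2 d4 d9 d5 d7 d9 (by rw [hf5, hf6, hB])⟩
  -- discharging the clause lists
  have h2core : ∀ q ∈ quartList, evenClauseB B q = true := by
    intro q hq
    fin_cases hq <;> exact hevenGen _ _ _ _ (by decide)
  have h3core : ∀ t ∈ satList, satClauseB B t = true := by
    intro t ht
    fin_cases ht <;> exact hsatGen _ _ _ _ _ (by decide)
  -- the count
  have hrc' : ∀ A : Finset (Fin 5), A.card = 3 → ∃ n : Fin 10, rset5 n = A := by decide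
  have hrinj : ∀ n m : Fin 10, rset5 n = rset5 m → n = m := by decide
  have hrcard : ∀ n : Fin 10, (rset5 n).card = 3 := by decide
  have hAset : {T : Finset X | T ∈ S.powersetCard 3 ∧ ValOn δ T a} =
      ↑((Finset.univ.filter fun n : Fin 10 => B n = true).image fun n => (rset5 n).image e) := by
    ext T
    simp only [Set.mem_setOf_eq, Finset.coe_image, Set.mem_image, Finset.mem_coe,
      Finset.mem_filter, Finset.mem_univ, true_and]
    constructor
    · rintro ⟨hpc, hval⟩
      rw [Finset.mem_powersetCard] at hpc
      obtain ⟨hsub, hcard3⟩ := hpc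
      have hTsub : T ⊆ Finset.univ.image e := by rw [← hSim]; exact hsub
      obtain ⟨A, -, hAimg⟩ := Finset.subset_image_iff.1 hTsub
      have hAcard : A.card = 3 := by
        rw [← Finset.card_image_of_injective A he_inj, hAimg, hcard3]
      obtain ⟨n, hn⟩ := hrc' A hAcard
      refine ⟨n, ?_, by rw [hn, hAimg]⟩
      show (if ValOn δ ((rset5 n).image e) a then true else false) = true
      rw [hn, hAimg, if_pos hval]
    · rintro ⟨n, hBn, rfl⟩
      have hval : ValOn δ ((rset5 n).image e) a := by
        by_contra hc
        rw [show B n = (if ValOn δ ((rset5 n).image e) a then true else false) from rfl,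
          if_neg hc] at hBn
        exact Bool.false_ne_true hBn
      refine ⟨?_, hval⟩
      rw [Finset.mem_powersetCard]
      constructor
      · intro w hw
        rw [hSim]
        exact Finset.image_subset_image (Finset.subset_univ _) hw
      · rw [Finset.card_image_of_injective _ he_inj]
        exact hrcard n
  have hcard10 : (Finset.univ.filter fun n : Fin 10 => B n = true).card = 5 := by
    have h1 := hncA
    rw [hAset, Set.ncard_coe_finset] at h1
    rw [Finset.card_image_of_injOn] at h1
    · exact h1
    · intro n _ m _ hnm
      exact hrinj n m (Finset.image_injective he_inj hnm)
  exact core5 B hcard10 h2core h3core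

end PhyloPaper
end

section
/- If δ is a symbolic ternary metric on X that is fully resolved (satisfies condition (*)), then the quartet system consisting of all quartets generated by δ is complete: for every 4-element subset {a,b,c,d} of X, exactly one of the three quartets ab|cd, ac|bd, ad|bc is generated by δ. -/
namespace PhyloPaper

variable {V X M : Type}

section Helpers

variable {δ : X → X → X → Option M}

lemma perm_yxz (hs : Symm3 δ) (x y z : X) : δ x y z = δ y x z := (hs x y z).1
lemma perm_xzy (hs : Symm3 δ) (x y z : X) : δ x y z = δ x z y := (hs x y z).2.1
lemma perm_zyx (hs : Symm3 δ) (x y z : X) : δ x y z = δ z y x := (hs x y z).2.2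
lemma perm_yzx (hs : Symm3 δ) (x y z : X) : δ x y z = δ y z x :=
  (perm_yxz hs x y z).trans (perm_xzy hs y x z)
lemma perm_zxy (hs : Symm3 δ) (x y z : X) : δ x y z = δ z x y :=
  (perm_xzy hs x y z).trans (perm_yxz hs x z y)

lemma delta_eq_of_finset_eq [DecidableEq X] (hs : Symm3 δ) {x y z x' y' z' : X}
    (hxy : x ≠ y) (hxz : x ≠ z) (hyz : y ≠ z)
    (h : ({x, y, z} : Finset X) = {x', y', z'}) : δ x y z = δ x' y' z' := by
  have hx : x ∈ ({x', y', z'} : Finset X) := by rw [← h]; simp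
  have hy : y ∈ ({x', y', z'} : Finset X) := by rw [← h]; simp
  have hz : z ∈ ({x', y', z'} : Finset X) := by rw [← h]; simp
  simp only [Finset.mem_insert, Finset.mem_singleton] at hx hy hz
  rcases hx with rfl | rfl | rfl <;> rcases hy with h2 | h2 | h2 <;>
    rcases hz with h3 | h3 | h3 <;> subst_vars <;>
    first
      | rfl
      | exact absurd rfl hxy
      | exact absurd rfl hxz
      | exact absurd rfl hyz
      | exact perm_xzy hs _ _ _
      | exact perm_yxz hs _ _ _
      | exact perm_zyx hs _ _ _
      | exact perm_yzx hs _ _ _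
      | exact perm_zxy hs _ _ _

lemma valOn_iff [DecidableEq X] (hs : Symm3 δ) {x y z : X}
    (hxy : x ≠ y) (hxz : x ≠ z) (hyz : y ≠ z) (a : Option M) :
    ValOn δ ({x, y, z} : Finset X) a ↔ δ x y z = a := by
  constructor
  · rintro ⟨x', y', z', h1, h2, h3, h4, rfl⟩
    exact delta_eq_of_finset_eq hs hxy hxz hyz h4
  · intro h
    exact ⟨x, y, z, hxy, hxz, hyz, rfl, h⟩

lemma valOn_mk [DecidableEq X] {x y z : X} {a : Option M}
    (hxy : x ≠ y) (hxz : x ≠ z) (hyz : y ≠ z) (h : δ x y z = a) :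
    ValOn δ ({x, y, z} : Finset X) a := ⟨x, y, z, hxy, hxz, hyz, rfl, h⟩

lemma count_transport [DecidableEq X] {n k : ℕ} (g : Fin n ↪ X) (P : Finset X → Prop)
    [DecidablePred P] :
    (((Finset.univ.map g).powersetCard k).filter P).card =
      ((Finset.univ.powersetCard k).filter (fun T => P (T.map g))).card := by
  rw [Finset.powersetCard_map, Finset.filter_map, Finset.card_map]
  rfl

lemma pc3_fin5 : ((Finset.univ : Finset (Fin 5)).powersetCard 3) =
    {{2, 3, 4}, {1, 3, 4}, {1, 2, 4}, {1, 2, 3}, {0, 3, 4},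
     {0, 2, 4}, {0, 2, 3}, {0, 1, 4}, {0, 1, 3}, {0, 1, 2}} := by decide

lemma pc3_fin4 : ((Finset.univ : Finset (Fin 4)).powersetCard 3) =
    {{1, 2, 3}, {0, 2, 3}, {0, 1, 3}, {0, 1, 2}} := by decide

def g4 (x y z u : X) : Fin 4 → X := ![x, y, z, u]

lemma g4_inj {x y z u : X} (h1 : x ≠ y) (h2 : x ≠ z) (h3 : x ≠ u)
    (h4 : y ≠ z) (h5 : y ≠ u) (h6 : z ≠ u) : Function.Injective (g4 x y z u) := by
  intro i j hij
  fin_cases i <;> fin_cases j <;> simp_all [g4]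

lemma map_g4 {x y z u : X} [DecidableEq X] (h : Function.Injective (g4 x y z u)) :
    Finset.univ.map ⟨g4 x y z u, h⟩ = ({x, y, z, u} : Finset X) := by
  rw [show (Finset.univ : Finset (Fin 4)) = {0, 1, 2, 3} by decide]
  simp [Finset.map_insert, g4]

open Classical in
lemma quad_count [DecidableEq X] (hs : Symm3 δ) {x y z u : X}
    (h1 : x ≠ y) (h2 : x ≠ z) (h3 : x ≠ u) (h4 : y ≠ z) (h5 : y ≠ u) (h6 : z ≠ u)
    (v : Option M) :
    {T : Finset X | T ∈ ({x, y, z, u} : Finset X).powersetCard 3 ∧ ValOn δ T v}.ncard =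
      (if δ y z u = v then 1 else 0) + (if δ x z u = v then 1 else 0) +
      (if δ x y u = v then 1 else 0) + (if δ x y z = v then 1 else 0) := by
  classical
  have hg := g4_inj h1 h2 h3 h4 h5 h6
  have hset : {T : Finset X | T ∈ ({x, y, z, u} : Finset X).powersetCard 3 ∧ ValOn δ T v}
      = ↑((({x, y, z, u} : Finset X).powersetCard 3).filter (fun T => ValOn δ T v)) := by
    ext T; simp
  rw [hset, Set.ncard_coe_finset, ← map_g4 hg, count_transport, pc3_fin4, Finset.card_filter,
    Finset.sum_insert (by decide), Finset.sum_insert (by decide),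
    Finset.sum_insert (by decide), Finset.sum_singleton]
  have e1 : ({1, 2, 3} : Finset (Fin 4)).map ⟨g4 x y z u, hg⟩ = {y, z, u} := by
    simp [Finset.map_insert, g4]
  have e2 : ({0, 2, 3} : Finset (Fin 4)).map ⟨g4 x y z u, hg⟩ = {x, z, u} := by
    simp [Finset.map_insert, g4]
  have e3 : ({0, 1, 3} : Finset (Fin 4)).map ⟨g4 x y z u, hg⟩ = {x, y, u} := by
    simp [Finset.map_insert, g4]
  have e4 : ({0, 1, 2} : Finset (Fin 4)).map ⟨g4 x y z u, hg⟩ = {x, y, z} := by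
    simp [Finset.map_insert, g4]
  rw [e1, e2, e3, e4]
  simp only [valOn_iff hs h4 h5 h6, valOn_iff hs h2 h3 h6, valOn_iff hs h1 h3 h5,
    valOn_iff hs h1 h2 h4]
  ring

def g5 (a b c d e : X) : Fin 5 → X := ![a, b, c, d, e]

lemma g5_inj {a b c d e : X} (hab : a ≠ b) (hac : a ≠ c) (had : a ≠ d) (hae : a ≠ e)
    (hbc : b ≠ c) (hbd : b ≠ d) (hbe : b ≠ e) (hcd : c ≠ d) (hce : c ≠ e) (hde : d ≠ e) :
    Function.Injective (g5 a b c d e) := by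
  intro i j hij
  fin_cases i <;> fin_cases j <;> simp_all [g5]

lemma map_g5 {a b c d e : X} [DecidableEq X] (h : Function.Injective (g5 a b c d e)) :
    Finset.univ.map ⟨g5 a b c d e, h⟩ = ({a, b, c, d, e} : Finset X) := by
  rw [show (Finset.univ : Finset (Fin 5)) = {0, 1, 2, 3, 4} by decide]
  simp [Finset.map_insert, g5]

open Classical in
lemma quint_count [DecidableEq X] (hs : Symm3 δ) {a b c d e : X}
    (hab : a ≠ b) (hac : a ≠ c) (had : a ≠ d) (hae : a ≠ e)
    (hbc : b ≠ c) (hbd : b ≠ d) (hbe : b ≠ e) (hcd : c ≠ d) (hce : c ≠ e) (hde : d ≠ e)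
    (v : Option M) :
    {T : Finset X | T ∈ ({a, b, c, d, e} : Finset X).powersetCard 3 ∧ ValOn δ T v}.ncard =
      (if δ c d e = v then 1 else 0) + (if δ b d e = v then 1 else 0) +
      (if δ b c e = v then 1 else 0) + (if δ b c d = v then 1 else 0) +
      (if δ a d e = v then 1 else 0) + (if δ a c e = v then 1 else 0) +
      (if δ a c d = v then 1 else 0) + (if δ a b e = v then 1 else 0) +
      (if δ a b d = v then 1 else 0) + (if δ a b c = v then 1 else 0) := by
  classical
  have hg := g5_inj hab hac had hae hbc hbd hbe hcd hce hde
  have hset : {T : Finset X | T ∈ ({a, b, c, d, e} : Finset X).powersetCard 3 ∧ ValOn δ T v}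
      = ↑((({a, b, c, d, e} : Finset X).powersetCard 3).filter (fun T => ValOn δ T v)) := by
    ext T; simp
  rw [hset, Set.ncard_coe_finset, ← map_g5 hg, count_transport, pc3_fin5, Finset.card_filter,
    Finset.sum_insert (by decide), Finset.sum_insert (by decide), Finset.sum_insert (by decide),
    Finset.sum_insert (by decide), Finset.sum_insert (by decide), Finset.sum_insert (by decide),
    Finset.sum_insert (by decide), Finset.sum_insert (by decide), Finset.sum_insert (by decide),
    Finset.sum_singleton]
  have e1 : ({2, 3, 4} : Finset (Fin 5)).map ⟨g5 a b c d e, hg⟩ = {c, d, e} := by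
    simp [Finset.map_insert, g5]
  have e2 : ({1, 3, 4} : Finset (Fin 5)).map ⟨g5 a b c d e, hg⟩ = {b, d, e} := by
    simp [Finset.map_insert, g5]
  have e3 : ({1, 2, 4} : Finset (Fin 5)).map ⟨g5 a b c d e, hg⟩ = {b, c, e} := by
    simp [Finset.map_insert, g5]
  have e4 : ({1, 2, 3} : Finset (Fin 5)).map ⟨g5 a b c d e, hg⟩ = {b, c, d} := by
    simp [Finset.map_insert, g5]
  have e5 : ({0, 3, 4} : Finset (Fin 5)).map ⟨g5 a b c d e, hg⟩ = {a, d, e} := by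
    simp [Finset.map_insert, g5]
  have e6 : ({0, 2, 4} : Finset (Fin 5)).map ⟨g5 a b c d e, hg⟩ = {a, c, e} := by
    simp [Finset.map_insert, g5]
  have e7 : ({0, 2, 3} : Finset (Fin 5)).map ⟨g5 a b c d e, hg⟩ = {a, c, d} := by
    simp [Finset.map_insert, g5]
  have e8 : ({0, 1, 4} : Finset (Fin 5)).map ⟨g5 a b c d e, hg⟩ = {a, b, e} := by
    simp [Finset.map_insert, g5]
  have e9 : ({0, 1, 3} : Finset (Fin 5)).map ⟨g5 a b c d e, hg⟩ = {a, b, d} := by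
    simp [Finset.map_insert, g5]
  have e10 : ({0, 1, 2} : Finset (Fin 5)).map ⟨g5 a b c d e, hg⟩ = {a, b, c} := by
    simp [Finset.map_insert, g5]
  rw [e1, e2, e3, e4, e5, e6, e7, e8, e9, e10]
  simp only [valOn_iff hs hcd hce hde, valOn_iff hs hbd hbe hde, valOn_iff hs hbc hbe hce,
    valOn_iff hs hbc hbd hcd, valOn_iff hs had hae hde, valOn_iff hs hac hae hce,
    valOn_iff hs hac had hcd, valOn_iff hs hab hae hbe, valOn_iff hs hab had hbd,
    valOn_iff hs hab hac hbc]
  ring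


lemma pc2_pair [DecidableEq X] {c d : X} (hcd : c ≠ d) :
    ({c, d} : Finset X).powersetCard 2 = {{c, d}} := by
  rw [show (2 : ℕ) = ({c,d} : Finset X).card by simp [hcd], Finset.powersetCard_self]

lemma pc3_triple [DecidableEq X] {c d e : X} (hcd : c ≠ d) (hce : c ≠ e) (hde : d ≠ e) :
    ({c, d, e} : Finset X).powersetCard 3 = {{c, d, e}} := by
  rw [show (3 : ℕ) = ({c,d,e} : Finset X).card by simp [hcd, hce, hde],
    Finset.powersetCard_self]

lemma pc1_triple [DecidableEq X] {c d e : X} :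
    ({c, d, e} : Finset X).powersetCard 1 = {{c}, {d}, {e}} := by
  rw [Finset.powersetCard_one]
  simp [Finset.map_insert]

lemma pc2_triple [DecidableEq X] {b c d : X} (hbc : b ≠ c) (hbd : b ≠ d) (hcd : c ≠ d) :
    ({b, c, d} : Finset X).powersetCard 2 = {{b,c}, {b,d}, {c,d}} := by
  rw [show ({b,c,d} : Finset X) = insert b {c,d} from rfl,
    Finset.powersetCard_succ_insert (by simp [hbc, hbd]),
    show Nat.succ 1 = 2 from rfl, pc2_pair hcd, Finset.powersetCard_one]
  ext T
  simp [Finset.insert_union]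
  tauto

lemma pc3_quad [DecidableEq X] {a b c d : X} (hab : a ≠ b) (hac : a ≠ c) (had : a ≠ d)
    (hbc : b ≠ c) (hbd : b ≠ d) (hcd : c ≠ d) :
    ({a, b, c, d} : Finset X).powersetCard 3 = {{b,c,d}, {a,b,c}, {a,b,d}, {a,c,d}} := by
  rw [show ({a,b,c,d} : Finset X) = insert a {b,c,d} from rfl,
    Finset.powersetCard_succ_insert (by simp [hab, hac, had]),
    show Nat.succ 2 = 3 from rfl, pc3_triple hbc hbd hcd, pc2_triple hbc hbd hcd]
  ext T
  simp [Finset.image_insert]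
  tauto

lemma pc2_quad [DecidableEq X] {a b c d : X} (hab : a ≠ b) (hac : a ≠ c) (had : a ≠ d)
    (hbc : b ≠ c) (hbd : b ≠ d) (hcd : c ≠ d) :
    ({a, b, c, d} : Finset X).powersetCard 2 =
      {{b,c}, {b,d}, {c,d}, {a,b}, {a,c}, {a,d}} := by
  rw [show ({a,b,c,d} : Finset X) = insert a {b,c,d} from rfl,
    Finset.powersetCard_succ_insert (by simp [hab, hac, had]),
    show Nat.succ 1 = 2 from rfl, pc2_triple hbc hbd hcd, pc1_triple]
  ext T
  simp [Finset.image_insert]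
  tauto

lemma pc3_quint [DecidableEq X] {a b c d e : X} (hab : a ≠ b) (hac : a ≠ c) (had : a ≠ d)
    (hae : a ≠ e) (hbc : b ≠ c) (hbd : b ≠ d) (hbe : b ≠ e) (hcd : c ≠ d) (hce : c ≠ e)
    (hde : d ≠ e) :
    ({a, b, c, d, e} : Finset X).powersetCard 3 =
      {{c,d,e}, {b,c,d}, {b,c,e}, {b,d,e},
       {a,b,c}, {a,b,d}, {a,b,e}, {a,c,d}, {a,c,e}, {a,d,e}} := by
  rw [show ({a,b,c,d,e} : Finset X) = insert a {b,c,d,e} from rfl,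
    Finset.powersetCard_succ_insert (by simp [hab, hac, had, hae]),
    show Nat.succ 2 = 3 from rfl, pc3_quad hbc hbd hbe hcd hce hde,
    pc2_quad hbc hbd hbe hcd hce hde]
  ext T
  simp [Finset.image_insert]
  tauto

lemma card3 [DecidableEq X] {x y z : X} (h1 : x ≠ y) (h2 : x ≠ z) (h3 : y ≠ z) :
    ({x, y, z} : Finset X).card = 3 := by
  rw [Finset.card_insert_of_notMem (by simp [h1, h2]),
    Finset.card_insert_of_notMem (by simp [h3]), Finset.card_singleton]

lemma card5 [DecidableEq X] {a b c d e : X} (hab : a ≠ b) (hac : a ≠ c) (had : a ≠ d)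
    (hae : a ≠ e) (hbc : b ≠ c) (hbd : b ≠ d) (hbe : b ≠ e) (hcd : c ≠ d) (hce : c ≠ e)
    (hde : d ≠ e) : ({a, b, c, d, e} : Finset X).card = 5 := by
  rw [Finset.card_insert_of_notMem (by simp [hab, hac, had, hae]),
    Finset.card_insert_of_notMem (by simp [hbc, hbd, hbe]),
    Finset.card_insert_of_notMem (by simp [hcd, hce]),
    Finset.card_insert_of_notMem (by simp [hde]), Finset.card_singleton]

lemma mem_pc3 [DecidableEq X] {x y z : X} {S : Finset X} (h1 : x ≠ y) (h2 : x ≠ z) (h3 : y ≠ z)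
    (hsub : ({x, y, z} : Finset X) ⊆ S) : ({x, y, z} : Finset X) ∈ S.powersetCard 3 :=
  Finset.mem_powersetCard.mpr ⟨hsub, card3 h1 h2 h3⟩

set_option maxHeartbeats 2000000 in
lemma quad_pattern [DecidableEq X] (hs : Symm3 δ) (h4 : FourPointCond δ) {x y z u : X}
    (hp : P4 x y z u) :
    (δ x y z = δ x y u ∧ δ x y u = δ x z u ∧ δ x z u = δ y z u) ∨
    (δ x y z = δ x y u ∧ δ x z u = δ y z u ∧ δ x y z ≠ δ x z u) ∨
    (δ x y z = δ x z u ∧ δ x y u = δ y z u ∧ δ x y z ≠ δ x y u) ∨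
    (δ x y z = δ y z u ∧ δ x y u = δ x z u ∧ δ x y z ≠ δ x y u) := by
  classical
  obtain ⟨h1, h2, h3, h4', h5, h6⟩ := hp
  by_cases hall : δ x y z = δ x y u ∧ δ x y u = δ x z u ∧ δ x z u = δ y z u
  · exact Or.inl hall
  have hex : ∃ a' b' : Option M, a' ∈ ({δ x y z, δ x y u, δ x z u, δ y z u} : Set (Option M)) ∧
      b' ∈ ({δ x y z, δ x y u, δ x z u, δ y z u} : Set (Option M)) ∧ a' ≠ b' := by
    by_cases eA : δ x y z = δ x y u
    · by_cases eB : δ x y u = δ x z u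
      · exact ⟨δ x z u, δ y z u, by simp, by simp, fun h => hall ⟨eA, eB, h⟩⟩
      · exact ⟨δ x y u, δ x z u, by simp, by simp, eB⟩
    · exact ⟨δ x y z, δ x y u, by simp, by simp, eA⟩
  have hn : ({δ x y z, δ x y u, δ x z u, δ y z u} : Set (Option M)).ncard = 2 := by
    have hle := (h4 x y z u ⟨h1, h2, h3, h4', h5, h6⟩).1
    have := (Set.one_lt_ncard_iff (Set.toFinite _)).mpr hex
    omega
  obtain ⟨p, q, hpq, hcp, hcq, hcov⟩ := (h4 x y z u ⟨h1, h2, h3, h4', h5, h6⟩).2 hn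
  rw [quad_count hs h1 h2 h3 h4' h5 h6] at hcp hcq
  have m1 := hcov {y, z, u} (mem_pc3 h4' h5 h6 (by intro t ht; simp at ht ⊢; tauto))
  have m2 := hcov {x, z, u} (mem_pc3 h2 h3 h6 (by intro t ht; simp at ht ⊢; tauto))
  have m3 := hcov {x, y, u} (mem_pc3 h1 h3 h5 (by intro t ht; simp at ht ⊢; tauto))
  have m4 := hcov {x, y, z} (mem_pc3 h1 h2 h4' (by intro t ht; simp at ht ⊢; tauto))
  rw [valOn_iff hs h4' h5 h6, valOn_iff hs h4' h5 h6] at m1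
  rw [valOn_iff hs h2 h3 h6, valOn_iff hs h2 h3 h6] at m2
  rw [valOn_iff hs h1 h3 h5, valOn_iff hs h1 h3 h5] at m3
  rw [valOn_iff hs h1 h2 h4', valOn_iff hs h1 h2 h4'] at m4
  rcases m1 with m1 | m1 <;> rcases m2 with m2 | m2 <;> rcases m3 with m3 | m3 <;>
    rcases m4 with m4 | m4 <;> simp_all [Ne.symm hpq]

set_option maxHeartbeats 4000000 in
lemma quint_pattern [DecidableEq X] (hs : Symm3 δ) (h4 : FourPointCond δ) {a b c d e : X}
    (hp : P5 a b c d e)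
    (hv2 : δ a b d = δ a b c) (hv3 : δ a c d = δ a b c) (hv4 : δ b c d = δ a b c)
    (hpart : Partitioned δ ({a, b, c, d, e} : Finset X) 4 6) :
    (δ a b e = δ a b c ∧ δ c d e = δ a b c ∧ δ a d e ≠ δ a b c ∧
      δ a d e = δ a c e ∧ δ a c e = δ b c e ∧ δ b c e = δ b d e) ∨
    (δ a c e = δ a b c ∧ δ b d e = δ a b c ∧ δ a d e ≠ δ a b c ∧
      δ a d e = δ a b e ∧ δ a b e = δ b c e ∧ δ b c e = δ c d e) ∨
    (δ a d e = δ a b c ∧ δ b c e = δ a b c ∧ δ a c e ≠ δ a b c ∧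
      δ a c e = δ a b e ∧ δ a b e = δ b d e ∧ δ b d e = δ c d e) := by
  classical
  obtain ⟨⟨hab, hac, had, hbc, hbd, hcd⟩, hae, hbe, hce, hde⟩ := hp
  obtain ⟨p, q, hpq, hcp, hcq, hcov⟩ := hpart
  rw [quint_count hs hab hac had hae hbc hbd hbe hcd hce hde] at hcp hcq
  have m1 := hcov {c, d, e} (mem_pc3 hcd hce hde (by intro t ht; simp at ht ⊢; tauto))
  have m2 := hcov {b, d, e} (mem_pc3 hbd hbe hde (by intro t ht; simp at ht ⊢; tauto))
  have m3 := hcov {b, c, e} (mem_pc3 hbc hbe hce (by intro t ht; simp at ht ⊢; tauto))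
  have m5 := hcov {a, d, e} (mem_pc3 had hae hde (by intro t ht; simp at ht ⊢; tauto))
  have m6 := hcov {a, c, e} (mem_pc3 hac hae hce (by intro t ht; simp at ht ⊢; tauto))
  have m8 := hcov {a, b, e} (mem_pc3 hab hae hbe (by intro t ht; simp at ht ⊢; tauto))
  have m10 := hcov {a, b, c} (mem_pc3 hab hac hbc (by intro t ht; simp at ht ⊢; tauto))
  rw [valOn_iff hs hcd hce hde, valOn_iff hs hcd hce hde] at m1
  rw [valOn_iff hs hbd hbe hde, valOn_iff hs hbd hbe hde] at m2
  rw [valOn_iff hs hbc hbe hce, valOn_iff hs hbc hbe hce] at m3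
  rw [valOn_iff hs had hae hde, valOn_iff hs had hae hde] at m5
  rw [valOn_iff hs hac hae hce, valOn_iff hs hac hae hce] at m6
  rw [valOn_iff hs hab hae hbe, valOn_iff hs hab hae hbe] at m8
  rw [valOn_iff hs hab hac hbc, valOn_iff hs hab hac hbc] at m10
  have H1 := quad_pattern hs h4 (⟨hab, hac, hae, hbc, hbe, hce⟩ : P4 a b c e)
  have H2 := quad_pattern hs h4 (⟨hab, had, hae, hbd, hbe, hde⟩ : P4 a b d e)
  have H3 := quad_pattern hs h4 (⟨hac, had, hae, hcd, hce, hde⟩ : P4 a c d e)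
  have H4 := quad_pattern hs h4 (⟨hbc, hbd, hbe, hcd, hce, hde⟩ : P4 b c d e)
  clear hcov
  rcases m10 with m10 | m10 <;> rcases m1 with m1 | m1 <;> rcases m2 with m2 | m2 <;>
    rcases m3 with m3 | m3 <;> rcases m5 with m5 | m5 <;> rcases m6 with m6 | m6 <;>
    rcases m8 with m8 | m8 <;> simp_all [Ne.symm hpq]

lemma quint_degenerate [DecidableEq X] {a b c d e : X}
    (hab : a ≠ b) (hac : a ≠ c) (had : a ≠ d) (hbc : b ≠ c) (hbd : b ≠ d) (hcd : c ≠ d)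
    (he : e = a ∨ e = b ∨ e = c ∨ e = d)
    (hpart : Partitioned δ ({a, b, c, d, e} : Finset X) 4 6) : False := by
  have hSeq : ({a, b, c, d, e} : Finset X) = {a, b, c, d} := by
    rcases he with rfl | rfl | rfl | rfl <;> (ext t; simp; try tauto)
  obtain ⟨p, q, hpq, hcp, hcq, hcov⟩ := hpart
  have hsub : {T : Finset X | T ∈ ({a, b, c, d, e} : Finset X).powersetCard 3 ∧ ValOn δ T q}
      ⊆ ↑(({a, b, c, d, e} : Finset X).powersetCard 3) := fun T hT => hT.1
  have hle := Set.ncard_le_ncard hsub (Set.toFinite _)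
  rw [hcq, Set.ncard_coe_finset, Finset.card_powersetCard, hSeq] at hle
  have h4 : ({a, b, c, d} : Finset X).card = 4 := by
    rw [Finset.card_insert_of_notMem (by simp [hab, hac, had]),
      Finset.card_insert_of_notMem (by simp [hbc, hbd]),
      Finset.card_insert_of_notMem (by simp [hcd]), Finset.card_singleton]
  rw [h4] at hle
  norm_num at hle

lemma gen_swap34 (hs : Symm3 δ) {x y z u : X} :
    Generates δ x y z u → Generates δ x y u z := by
  rintro ⟨⟨p1, p2, p3, p4, p5, p6⟩, h⟩
  refine ⟨⟨p1, p3, p2, p5, p4, Ne.symm p6⟩, ?_⟩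
  have s1 := perm_xzy hs x u z
  have s2 := perm_xzy hs y u z
  have s3 := perm_xzy hs x z u
  have s4 := perm_xzy hs y z u
  rcases h with ⟨q1, q2, q3⟩ | ⟨q1, q2, q3, e, r1, r2, r3, r4, r5, r6⟩
  · exact Or.inl ⟨by grind, by grind, by grind⟩
  · refine Or.inr ⟨by grind, by grind, by grind, e, by grind, ?_, by grind, by grind, by grind, by grind⟩
    have s5 := perm_yxz hs z u e
    grind

lemma not_none_of_p3 (hvan : VanishCond δ) {x y z : X}
    (h1 : x ≠ y) (h2 : x ≠ z) (h3 : y ≠ z) : δ x y z ≠ none := by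
  intro h
  rcases (hvan x y z).mp h with h' | h' | h' <;> [exact h1 h'; exact h3 h'; exact h2 h']

set_option maxHeartbeats 4000000 in
lemma not_both [DecidableEq X] (hs : Symm3 δ) (hvan : VanishCond δ) (h4 : FourPointCond δ)
    (h5 : FivePointCond δ) {x y z u : X} (hp : P4 x y z u) :
    ¬(Generates δ x y z u ∧ Generates δ x z y u) := by
  classical
  obtain ⟨h1, h2, h3, h4', h5', h6⟩ := hp
  rintro ⟨⟨_, G1⟩, ⟨_, G2⟩⟩
  have pv := perm_xzy hs x y z
  have p1 := perm_yxz hs z y u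
  rcases G1 with ⟨q1, q2, q3⟩ | ⟨q1, q2, q3, e, r1, r2, r3, r4, r5, r6⟩ <;>
    rcases G2 with ⟨s1, s2, s3⟩ | ⟨s1, s2, s3, f, t1, t2, t3, t4, t5, t6⟩
  · exact q2 (by grind)
  · exact q2 (by grind)
  · exact s2 (by grind)
  · -- both second-case: witnesses e and f
    have p2 := perm_yxz hs z y f
    -- canonical value facts
    have k_xyu : δ x y u = δ x y z := q1.symm
    have k_xzu : δ x z u = δ x y z := by grind
    have k_yzu : δ y z u = δ x y z := by grind
    have k_yze : δ y z e = δ x u e := by grind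
    have k_yue : δ y u e = δ x u e := by grind
    have k_xze : δ x z e = δ x u e := r4.symm
    have k_xzf : δ x z f = δ x y z := by grind
    have k_yuf : δ y u f = δ x y z := by grind
    have k_xyf : δ x y f = δ x u f := t4.symm
    have k_yzf : δ y z f = δ x u f := by grind
    have k_zuf : δ z u f = δ x u f := by grind
    have c3 : δ x u f ≠ δ x y z := fun h => t3 (by grind)
    have hvnone : δ x y z ≠ none := not_none_of_p3 hvan h1 h2 h4'
    have hex : e ≠ x := fun h => hvnone (by
      have := (hvan x y e).mpr (Or.inr (Or.inr h.symm)); grind)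
    have hey : e ≠ y := fun h => hvnone (by
      have := (hvan x y e).mpr (Or.inr (Or.inl h.symm)); grind)
    have hez : e ≠ z := fun h => hvnone (by
      have := (hvan z u e).mpr (Or.inr (Or.inr h.symm)); grind)
    have heu : e ≠ u := fun h => hvnone (by
      have := (hvan z u e).mpr (Or.inr (Or.inl h.symm)); grind)
    have hfx : f ≠ x := fun h => hvnone (by
      have := (hvan x z f).mpr (Or.inr (Or.inr h.symm)); grind)
    have hfz : f ≠ z := fun h => hvnone (by
      have := (hvan x z f).mpr (Or.inr (Or.inl h.symm)); grind)
    have hfy : f ≠ y := fun h => hvnone (by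
      have := (hvan y u f).mpr (Or.inr (Or.inr h.symm)); grind)
    have hfu : f ≠ u := fun h => hvnone (by
      have := (hvan y u f).mpr (Or.inr (Or.inl h.symm)); grind)
    have hef : e ≠ f := fun h => c3 (by grind)
    by_cases hww : δ x u e = δ x u f
    · -- w = w' ; normalize all f-values to δ x u e
      have k2_xyf : δ x y f = δ x u e := by grind
      have k2_yzf : δ y z f = δ x u e := by grind
      have k2_zuf : δ z u f = δ x u e := by grind
      have k2_xuf : δ x u f = δ x u e := hww.symm
      rcases quad_pattern hs h4
          (⟨h2, Ne.symm hex, Ne.symm hfx, Ne.symm hez, Ne.symm hfz, hef⟩ : P4 x z e f) with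
        ⟨a1, a2, a3⟩ | ⟨a1, a2, a3⟩ | ⟨a1, a2, a3⟩ | ⟨a1, a2, a3⟩
      · exact r3 (by grind)
      · exact r3 (by grind)
      · -- δ x e f = w, δ z e f = v
        have hxef : δ x e f = δ x u e := by grind
        have hzef : δ z e f = δ x y z := by grind
        have huef : δ u e f = δ x u e := by
          rcases quad_pattern hs h4
              (⟨h3, Ne.symm hex, Ne.symm hfx, Ne.symm heu, Ne.symm hfu, hef⟩ : P4 x u e f) with ⟨b1, b2, b3⟩ | ⟨b1, b2, b3⟩ | ⟨b1, b2, b3⟩ | ⟨b1, b2, b3⟩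
          · grind
          · exact absurd (by grind) b3
          · grind
          · grind
        have hyef : δ y e f = δ x y z := by
          rcases quad_pattern hs h4
              (⟨h5', Ne.symm hey, Ne.symm hfy, Ne.symm heu, Ne.symm hfu, hef⟩ : P4 y u e f) with ⟨b1, b2, b3⟩ | ⟨b1, b2, b3⟩ | ⟨b1, b2, b3⟩ | ⟨b1, b2, b3⟩
          · exact absurd (by grind : δ x u e = δ x y z) r3
          · exact absurd (by grind : δ x u e = δ x y z) r3
          · exact absurd (by grind : δ x u e = δ x y z) r3
          · grind
        refine h5 {y, z, u, e, f}
          (card5 h4' h5' (Ne.symm hey) (Ne.symm hfy) h6 (Ne.symm hez) (Ne.symm hfz)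
            (Ne.symm heu) (Ne.symm hfu) hef)
          ⟨δ x y z, δ x u e, Ne.symm r3, ?_, ?_, ?_⟩
        · rw [quint_count hs h4' h5' (Ne.symm hey) (Ne.symm hfy) h6 (Ne.symm hez) (Ne.symm hfz)
            (Ne.symm heu) (Ne.symm hfu) hef]
          simp [huef, hzef, k2_zuf, r2, hyef, k_yuf, k_yue, k2_yzf, k_yze, k_yzu, r3]
        · rw [quint_count hs h4' h5' (Ne.symm hey) (Ne.symm hfy) h6 (Ne.symm hez) (Ne.symm hfz)
            (Ne.symm heu) (Ne.symm hfu) hef]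
          simp [huef, hzef, k2_zuf, r2, hyef, k_yuf, k_yue, k2_yzf, k_yze, k_yzu, Ne.symm r3]
        · intro T hT
          rw [pc3_quint h4' h5' (Ne.symm hey) (Ne.symm hfy) h6 (Ne.symm hez) (Ne.symm hfz)
            (Ne.symm heu) (Ne.symm hfu) hef] at hT
          simp only [Finset.mem_insert, Finset.mem_singleton] at hT
          rcases hT with rfl | rfl | rfl | rfl | rfl | rfl | rfl | rfl | rfl | rfl
          · exact Or.inr (valOn_mk (Ne.symm heu) (Ne.symm hfu) hef huef)
          · exact Or.inl (valOn_mk h6 (Ne.symm hez) (Ne.symm heu) r2)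
          · exact Or.inr (valOn_mk h6 (Ne.symm hfz) (Ne.symm hfu) k2_zuf)
          · exact Or.inl (valOn_mk (Ne.symm hez) (Ne.symm hfz) hef hzef)
          · exact Or.inl (valOn_mk h4' h5' h6 k_yzu)
          · exact Or.inr (valOn_mk h4' (Ne.symm hey) (Ne.symm hez) k_yze)
          · exact Or.inr (valOn_mk h4' (Ne.symm hfy) (Ne.symm hfz) k2_yzf)
          · exact Or.inr (valOn_mk h5' (Ne.symm hey) (Ne.symm heu) k_yue)
          · exact Or.inl (valOn_mk h5' (Ne.symm hfy) (Ne.symm hfu) k_yuf)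
          · exact Or.inl (valOn_mk (Ne.symm hey) (Ne.symm hfy) hef hyef)
      · -- δ x e f = v, δ z e f = w
        have hxef : δ x e f = δ x y z := by grind
        have hzef : δ z e f = δ x u e := by grind
        have huef : δ u e f = δ x y z := by
          rcases quad_pattern hs h4
              (⟨h3, Ne.symm hex, Ne.symm hfx, Ne.symm heu, Ne.symm hfu, hef⟩ : P4 x u e f) with ⟨b1, b2, b3⟩ | ⟨b1, b2, b3⟩ | ⟨b1, b2, b3⟩ | ⟨b1, b2, b3⟩
          · exact absurd (by grind : δ x u e = δ x y z) r3
          · grind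
          · exact absurd hww b3
          · exact absurd (by grind : δ x u e = δ x y z) r3
        have hyef : δ y e f = δ x u e := by
          rcases quad_pattern hs h4
              (⟨h5', Ne.symm hey, Ne.symm hfy, Ne.symm heu, Ne.symm hfu, hef⟩ : P4 y u e f) with ⟨b1, b2, b3⟩ | ⟨b1, b2, b3⟩ | ⟨b1, b2, b3⟩ | ⟨b1, b2, b3⟩
          · exact absurd (by grind : δ x u e = δ x y z) r3
          · exact absurd (by grind : δ x u e = δ x y z) r3
          · grind
          · exact absurd (by grind : δ x u e = δ x y z) r3
        refine h5 {x, y, u, e, f}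
          (card5 h1 h3 (Ne.symm hex) (Ne.symm hfx) h5' (Ne.symm hey) (Ne.symm hfy)
            (Ne.symm heu) (Ne.symm hfu) hef)
          ⟨δ x y z, δ x u e, Ne.symm r3, ?_, ?_, ?_⟩
        · rw [quint_count hs h1 h3 (Ne.symm hex) (Ne.symm hfx) h5' (Ne.symm hey) (Ne.symm hfy)
            (Ne.symm heu) (Ne.symm hfu) hef]
          simp [huef, hyef, k_yuf, k_yue, hxef, k2_xuf, k2_xyf, r1, k_xyu, r3]
        · rw [quint_count hs h1 h3 (Ne.symm hex) (Ne.symm hfx) h5' (Ne.symm hey) (Ne.symm hfy)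
            (Ne.symm heu) (Ne.symm hfu) hef]
          simp [huef, hyef, k_yuf, k_yue, hxef, k2_xuf, k2_xyf, r1, k_xyu, Ne.symm r3]
        · intro T hT
          rw [pc3_quint h1 h3 (Ne.symm hex) (Ne.symm hfx) h5' (Ne.symm hey) (Ne.symm hfy)
            (Ne.symm heu) (Ne.symm hfu) hef] at hT
          simp only [Finset.mem_insert, Finset.mem_singleton] at hT
          rcases hT with rfl | rfl | rfl | rfl | rfl | rfl | rfl | rfl | rfl | rfl
          · exact Or.inl (valOn_mk (Ne.symm heu) (Ne.symm hfu) hef huef)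
          · exact Or.inr (valOn_mk h5' (Ne.symm hey) (Ne.symm heu) k_yue)
          · exact Or.inl (valOn_mk h5' (Ne.symm hfy) (Ne.symm hfu) k_yuf)
          · exact Or.inr (valOn_mk (Ne.symm hey) (Ne.symm hfy) hef hyef)
          · exact Or.inl (valOn_mk h1 h3 h5' k_xyu)
          · exact Or.inl (valOn_mk h1 (Ne.symm hex) (Ne.symm hey) r1)
          · exact Or.inr (valOn_mk h1 (Ne.symm hfx) (Ne.symm hfy) k2_xyf)
          · exact Or.inr (valOn_mk h3 (Ne.symm hex) (Ne.symm heu) rfl)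
          · exact Or.inr (valOn_mk h3 (Ne.symm hfx) (Ne.symm hfu) k2_xuf)
          · exact Or.inl (valOn_mk (Ne.symm hex) (Ne.symm hfx) hef hxef)
    · -- w ≠ w'
      rcases quad_pattern hs h4
          (⟨h2, Ne.symm hex, Ne.symm hfx, Ne.symm hez, Ne.symm hfz, hef⟩ : P4 x z e f) with
        ⟨a1, a2, a3⟩ | ⟨a1, a2, a3⟩ | ⟨a1, a2, a3⟩ | ⟨a1, a2, a3⟩
      · exact r3 (by grind)
      · exact r3 (by grind)
      · -- δ x e f = δ x u e
        have huef : δ u e f = δ x u f := by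
          rcases quad_pattern hs h4
              (⟨h3, Ne.symm hex, Ne.symm hfx, Ne.symm heu, Ne.symm hfu, hef⟩ : P4 x u e f) with ⟨b1, b2, b3⟩ | ⟨b1, b2, b3⟩ | ⟨b1, b2, b3⟩ | ⟨b1, b2, b3⟩
          · exact absurd b1 hww
          · exact absurd b1 hww
          · grind
          · exact absurd (by grind : δ x u e = δ x u f) hww
        rcases quad_pattern hs h4
            (⟨h5', Ne.symm hey, Ne.symm hfy, Ne.symm heu, Ne.symm hfu, hef⟩ : P4 y u e f) with
          ⟨b1, b2, b3⟩ | ⟨b1, b2, b3⟩ | ⟨b1, b2, b3⟩ | ⟨b1, b2, b3⟩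
        · exact r3 (by grind)
        · exact r3 (by grind)
        · exact c3 (by grind)
        · exact hww (by grind)
      · -- δ x e f = δ x z f = v
        rcases quad_pattern hs h4
            (⟨h3, Ne.symm hex, Ne.symm hfx, Ne.symm heu, Ne.symm hfu, hef⟩ : P4 x u e f) with ⟨b1, b2, b3⟩ | ⟨b1, b2, b3⟩ | ⟨b1, b2, b3⟩ | ⟨b1, b2, b3⟩
        · exact hww b1
        · exact hww b1
        · exact r3 (by grind)
        · exact c3 (by grind)


end Helpers

set_option maxHeartbeats 2000000 in
/-- A fully resolved symbolic ternary metric generates a complete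
quartet system: for every 4 distinct taxa, exactly one of the three quartets is
generated. -/
theorem fully_resolved_generates_complete
    {X M : Type} [Fintype X] [DecidableEq X] [Fintype M] [Nonempty M]
    (hX : 3 ≤ Fintype.card X)
    (δ : X → X → X → Option M) (hδ : IsSymbolicTernaryMetric δ)
    (hfr : FullyResolved δ) :
    CompleteQ (Generates δ) := by
  classical
  obtain ⟨hs, hvan, h4, h5⟩ := hδ
  intro a b c d hp
  obtain ⟨hab, hac, had, hbc, hbd, hcd⟩ := hp
  refine ⟨?_, ?_, ?_, ?_⟩
  · -- existence
    rcases quad_pattern hs h4 (⟨hab, hac, had, hbc, hbd, hcd⟩ : P4 a b c d) with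
      ⟨e1, e2, e3⟩ | ⟨e1, e2, e3⟩ | ⟨e1, e2, e3⟩ | ⟨e1, e2, e3⟩
    · -- all four values equal: use full resolution
      have hn1 : ({δ a b c, δ a b d, δ a c d, δ b c d} : Set (Option M)).ncard = 1 := by
        rw [show δ a b d = δ a b c by grind, show δ a c d = δ a b c by grind,
          show δ b c d = δ a b c by grind]
        simp
      obtain ⟨e, hpart⟩ := hfr a b c d ⟨hab, hac, had, hbc, hbd, hcd⟩ hn1
      have hea : e ≠ a := fun h => quint_degenerate hab hac had hbc hbd hcd (Or.inl h) hpart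
      have heb : e ≠ b := fun h =>
        quint_degenerate hab hac had hbc hbd hcd (Or.inr (Or.inl h)) hpart
      have hec : e ≠ c := fun h =>
        quint_degenerate hab hac had hbc hbd hcd (Or.inr (Or.inr (Or.inl h))) hpart
      have hed : e ≠ d := fun h =>
        quint_degenerate hab hac had hbc hbd hcd (Or.inr (Or.inr (Or.inr h))) hpart
      have hp5 : P5 a b c d e :=
        ⟨⟨hab, hac, had, hbc, hbd, hcd⟩, Ne.symm hea, Ne.symm heb, Ne.symm hec, Ne.symm hed⟩
      rcases quint_pattern hs h4 hp5 e1.symm (by grind) (by grind) hpart with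
        ⟨w1, w2, w3, w4, w5, w6⟩ | ⟨w1, w2, w3, w4, w5, w6⟩ | ⟨w1, w2, w3, w4, w5, w6⟩
      · exact Or.inl ⟨⟨hab, hac, had, hbc, hbd, hcd⟩,
          Or.inr ⟨e1, by grind, by grind, e, w1, w2, w3, w4, w5, w6⟩⟩
      · refine Or.inr (Or.inl ⟨⟨hac, hab, had, Ne.symm hbc, hcd, hbd⟩, Or.inr ?_⟩)
        have pacb := perm_xzy hs a b c
        have pcbd := perm_yxz hs c b d
        have pcbe := perm_yxz hs c b e
        exact ⟨by grind, by grind, by grind, e, by grind, by grind, by grind, by grind, by grind, by grind⟩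
      · refine Or.inr (Or.inr ⟨⟨had, hab, hac, Ne.symm hbd, Ne.symm hcd, hbc⟩, Or.inr ?_⟩)
        have padb := perm_xzy hs a b d
        have padc := perm_xzy hs a c d
        have pdbc := perm_zxy hs b c d
        have pdbe := perm_yxz hs d b e
        have pdce := perm_yxz hs d c e
        exact ⟨by grind, by grind, by grind, e, by grind, by grind, by grind, by grind, by grind, by grind⟩
    · -- 2-2 split ab|cd
      refine Or.inl ⟨⟨hab, hac, had, hbc, hbd, hcd⟩, Or.inl ⟨e2, fun h => e3 (by grind), e1⟩⟩
    · -- 2-2 split ac|bd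
      refine Or.inr (Or.inl ⟨⟨hac, hab, had, Ne.symm hbc, hcd, hbd⟩, Or.inl ?_⟩)
      have pacb := perm_xzy hs a b c
      have pcbd := perm_yxz hs c b d
      exact ⟨by grind, fun h => e3 (by grind), by grind⟩
    · -- 2-2 split ad|bc
      refine Or.inr (Or.inr ⟨⟨had, hab, hac, Ne.symm hbd, Ne.symm hcd, hbc⟩, Or.inl ?_⟩)
      have padb := perm_xzy hs a b d
      have padc := perm_xzy hs a c d
      have pdbc := perm_zxy hs b c d
      exact ⟨by grind, fun h => e3 (by grind), by grind⟩
  · exact not_both hs hvan h4 h5 ⟨hab, hac, had, hbc, hbd, hcd⟩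
  · rintro ⟨g1, g2⟩
    exact not_both hs hvan h4 h5 (⟨hab, had, hac, hbd, hbc, Ne.symm hcd⟩ : P4 a b d c)
      ⟨gen_swap34 hs g1, g2⟩
  · rintro ⟨g1, g2⟩
    exact not_both hs hvan h4 h5 (⟨hac, had, hab, hcd, Ne.symm hbc, Ne.symm hbd⟩ : P4 a c d b)
      ⟨gen_swap34 hs g1, gen_swap34 hs g2⟩

end PhyloPaper
end
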